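/- arXiv:2501.17735 — 7 statements merged into one kernel-verified Lean document; each statement's English description precedes it below -/
import Mathlib

section
/- Let ν ∈ (0,1], let k ≠ 0 and l be integers, and let η ∈ ℝ. Then there exists a universal constant C > 0 (independent of ν, k, η, l and t) such that for all t ≥ 0 one has ν^{1/3} + √(k²+l²)/√(k² + (η − kt)² + l²) ≤ C · m(t; k, η, l), and moreover m(t; k, η, l) ≤ 1. -/
open MeasureTheory Set

/-- The multiplier symbol `m(t; k, η, l)` from Bedrossian–Germain–Masmoudi,
defined as the exponential of the time integral of the shear symbol over the
critical interval `[η/k, η/k + 1000 ν^{-1/3}]`. -/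
noncomputable def mSymb (ν : ℝ) (k l : ℤ) (η t : ℝ) : ℝ :=
  Real.exp (∫ s in (0:ℝ)..t,
    Set.indicator (Set.Icc (η / (k:ℝ)) (η / (k:ℝ) + 1000 * ν ^ ((-1 : ℝ)/3)))
      (fun s => (k:ℝ) * (η - (k:ℝ) * s) /
        ((k:ℝ)^2 + (η - (k:ℝ) * s)^2 + (l:ℝ)^2)) s)

noncomputable def Nd (K L η s : ℝ) : ℝ := K^2 + (η - K*s)^2 + L^2
noncomputable def gf (K L η s : ℝ) : ℝ := K * (η - K*s) / Nd K L η s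
noncomputable def phif (K L η s : ℝ) : ℝ := -(Real.log (Nd K L η s) / 2)

lemma Nd_pos {K : ℝ} (hK : K ≠ 0) (L η s : ℝ) : 0 < Nd K L η s := by
  unfold Nd; positivity

lemma hasDerivAt_phif {K : ℝ} (hK : K ≠ 0) (L η s : ℝ) :
    HasDerivAt (phif K L η) (gf K L η s) s := by
  have h1 : HasDerivAt (fun s : ℝ => η - K * s) (-K) s := by
    simpa using ((hasDerivAt_id s).const_mul K).const_sub η
  have h2 : HasDerivAt (fun s => Nd K L η s) (2 * (η - K*s) * (-K)) s := by
    have := ((h1.pow 2).const_add (K^2)).add_const (L^2)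
    simpa [Nd] using this
  have h3 := (h2.log (Nd_pos hK L η s).ne').div_const 2
  have h4 := h3.neg
  apply h4.congr_deriv
  have hN := (Nd_pos hK L η s).ne'
  rw [gf]
  field_simp

lemma cont_gf {K : ℝ} (hK : K ≠ 0) (L η : ℝ) : Continuous (gf K L η) := by
  apply Continuous.div
  · fun_prop
  · unfold Nd; fun_prop
  · exact fun s => (Nd_pos hK L η s).ne'

lemma integral_gf {K : ℝ} (hK : K ≠ 0) (L η a b : ℝ) :
    ∫ s in a..b, gf K L η s = phif K L η b - phif K L η a :=
  intervalIntegral.integral_eq_sub_of_hasDerivAt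
    (fun x _ => hasDerivAt_phif hK L η x)
    ((cont_gf hK L η).intervalIntegrable a b)

lemma exp_half_log {x : ℝ} (hx : 0 < x) : Real.exp (Real.log x / 2) = Real.sqrt x := by
  rw [Real.sqrt_eq_rpow, Real.rpow_def_of_pos hx]
  congr 1
  ring

lemma mSymb_eq (ν : ℝ) (k l : ℤ) (hK : (k:ℝ) ≠ 0) (η t : ℝ) (ht : 0 ≤ t) :
    mSymb ν k l η t =
      Real.exp (∫ s in Ioc (max 0 (η / (k:ℝ)))
          (min t (η / (k:ℝ) + 1000 * ν ^ ((-1:ℝ)/3))), gf (k:ℝ) (l:ℝ) η s) := by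
  unfold mSymb
  congr 1
  rw [intervalIntegral.integral_of_le ht,
    setIntegral_indicator measurableSet_Icc]
  refine (setIntegral_congr_set (ae_eq_set_inter (Filter.EventuallyEq.refl _ _)
      Ioc_ae_eq_Icc.symm)).trans ?_
  rw [Set.Ioc_inter_Ioc]
  rfl

set_option maxHeartbeats 1000000 in
/-- Uniform bounds for the multiplier `m`:
`ν^{1/3} + |(k,l)|/|(k,η-kt,l)| ≤ C m` and `m ≤ 1`. -/
theorem uniform_bounds_m :
    ∃ C : ℝ, 0 < C ∧
      ∀ (ν : ℝ), 0 < ν → ν ≤ 1 →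
      ∀ (k l : ℤ), k ≠ 0 →
      ∀ (η t : ℝ), 0 ≤ t →
        ν ^ ((1:ℝ)/3) +
          Real.sqrt ((k:ℝ)^2 + (l:ℝ)^2) /
            Real.sqrt ((k:ℝ)^2 + (η - (k:ℝ)*t)^2 + (l:ℝ)^2)
          ≤ C * mSymb ν k l η t
        ∧ mSymb ν k l η t ≤ 1 := by
  refine ⟨1501, by norm_num, ?_⟩
  intro ν hν hν1 k l hk η t ht
  have hK : (k:ℝ) ≠ 0 := Int.cast_ne_zero.mpr hk
  set K : ℝ := (k:ℝ) with hKdef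
  set L : ℝ := (l:ℝ) with hLdef
  set p : ℝ := η / K with hpdef
  set T : ℝ := 1000 * ν ^ ((-1:ℝ)/3) with hTdef
  have hT0 : 0 < T := by positivity
  set q : ℝ := p + T with hqdef
  set a : ℝ := max 0 p with hadef
  set b : ℝ := min t q with hbdef
  have hm : mSymb ν k l η t = Real.exp (∫ s in Ioc a b, gf K L η s) :=
    mSymb_eq ν k l hK η t ht
  have hη : η = K * p := by rw [hpdef, mul_div_cancel₀ _ hK]
  have hsq : ∀ s : ℝ, (η - K*s)^2 = K^2 * (s - p)^2 := fun s => by rw [hη]; ring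
  have hS : (0:ℝ) < K^2 + L^2 := by positivity
  have hSt : K^2 + L^2 ≤ Nd K L η t := by
    unfold Nd; nlinarith [sq_nonneg (η - K*t)]
  by_cases hab : a ≤ b
  · -- nonempty case
    have hpa : p ≤ a := le_max_right _ _
    have hbq : b ≤ q := min_le_right _ _
    have hbt : b ≤ t := min_le_left _ _
    have hpb : p ≤ b := hpa.trans hab
    have hIoc : (∫ s in Ioc a b, gf K L η s) = phif K L η b - phif K L η a := by
      rw [← intervalIntegral.integral_of_le hab, integral_gf hK]
    have hmval : mSymb ν k l η t = Real.sqrt (Nd K L η a) / Real.sqrt (Nd K L η b) := by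
      rw [hm, hIoc]
      unfold phif
      rw [show -(Real.log (Nd K L η b)/2) - -(Real.log (Nd K L η a)/2)
          = Real.log (Nd K L η a)/2 - Real.log (Nd K L η b)/2 by ring,
        Real.exp_sub, exp_half_log (Nd_pos hK L η a), exp_half_log (Nd_pos hK L η b)]
    have hNa : K^2 + L^2 ≤ Nd K L η a := by
      unfold Nd; nlinarith [sq_nonneg (η - K*a)]
    have key : ∀ u v : ℝ, p ≤ u → u ≤ v → Nd K L η u ≤ Nd K L η v := by
      intro u v hu huv
      unfold Nd
      rw [hsq u, hsq v]
      have h1 : (u - p)^2 ≤ (v - p)^2 :=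
        pow_le_pow_left₀ (by linarith) (by linarith) 2
      have h2 := mul_le_mul_of_nonneg_left h1 (sq_nonneg K)
      linarith
    have hNab : Nd K L η a ≤ Nd K L η b := key a b hpa hab
    have hNbt : Nd K L η b ≤ Nd K L η t := key b t hpb hbt
    have hNbq : Nd K L η b ≤ (K^2 + L^2) * (1 + T^2) := by
      unfold Nd
      rw [hsq b]
      have h1 : (b - p)^2 ≤ T^2 := by
        have : b - p ≤ T := by
          have := hbq
          rw [hqdef] at this
          linarith
        exact pow_le_pow_left₀ (by linarith) this 2
      have h2 : K^2 * (b-p)^2 ≤ (K^2 + L^2) * T^2 :=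
        mul_le_mul (by linarith [sq_nonneg L]) h1 (sq_nonneg _) hS.le
      have hexp : (K^2 + L^2) * (1 + T^2) = K^2 + L^2 + (K^2 + L^2) * T^2 := by ring
      linarith
    have hbpos : 0 < Real.sqrt (Nd K L η b) := Real.sqrt_pos.mpr (Nd_pos hK L η b)
    have hmle1 : mSymb ν k l η t ≤ 1 := by
      rw [hmval]
      exact (div_le_one hbpos).mpr (Real.sqrt_le_sqrt hNab)
    refine ⟨?_, hmle1⟩
    have h2 : Real.sqrt (K^2 + L^2) / Real.sqrt (Nd K L η t) ≤ mSymb ν k l η t := by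
      rw [hmval]
      exact div_le_div₀ (Real.sqrt_nonneg _) (Real.sqrt_le_sqrt hNa) hbpos
        (Real.sqrt_le_sqrt hNbt)
    have h1 : ν ^ ((1:ℝ)/3) ≤ 1500 * mSymb ν k l η t := by
      rw [hmval]
      have hT2pos : (0:ℝ) < 1 + T^2 := by positivity
      have hlow : 1 / Real.sqrt (1 + T^2)
          ≤ Real.sqrt (Nd K L η a) / Real.sqrt (Nd K L η b) := by
        have e1 : Real.sqrt ((K^2 + L^2) * (1 + T^2))
            = Real.sqrt (K^2 + L^2) * Real.sqrt (1 + T^2) := Real.sqrt_mul hS.le _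
        have e2 : Real.sqrt (K^2 + L^2) / Real.sqrt ((K^2 + L^2) * (1 + T^2))
            = 1 / Real.sqrt (1 + T^2) := by
          rw [e1]
          rw [div_mul_eq_div_div, div_self (Real.sqrt_pos.mpr hS).ne']
        rw [← e2]
        exact div_le_div₀ (Real.sqrt_nonneg _) (Real.sqrt_le_sqrt hNa) hbpos
          (Real.sqrt_le_sqrt hNbq)
      have hcancel : ν ^ ((1:ℝ)/3) * ν ^ ((-1:ℝ)/3) = 1 := by
        rw [← Real.rpow_add hν]; norm_num
      have hν23 : Real.sqrt (1 + T^2) ≤ 1500 * ν ^ ((-1:ℝ)/3) := by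
        have hr : (0:ℝ) < ν ^ ((-1:ℝ)/3) := Real.rpow_pos_of_pos hν _
        have hge1 : (1:ℝ) ≤ ν ^ ((-1:ℝ)/3) :=
          Real.one_le_rpow_of_pos_of_le_one_of_nonpos hν hν1 (by norm_num)
        have hbound : 1 + T^2 ≤ (1500 * ν ^ ((-1:ℝ)/3))^2 := by
          rw [hTdef]
          nlinarith [mul_le_mul hge1 hge1 (by norm_num : (0:ℝ) ≤ 1) hr.le]
        calc Real.sqrt (1 + T^2) ≤ Real.sqrt ((1500 * ν ^ ((-1:ℝ)/3))^2) :=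
              Real.sqrt_le_sqrt hbound
          _ = 1500 * ν ^ ((-1:ℝ)/3) := Real.sqrt_sq (by positivity)
      have hsp : 0 < Real.sqrt (1 + T^2) := Real.sqrt_pos.mpr hT2pos
      have hstep : ν ^ ((1:ℝ)/3) ≤ 1500 * (1 / Real.sqrt (1 + T^2)) := by
        rw [mul_one_div, le_div_iff₀ hsp]
        calc ν ^ ((1:ℝ)/3) * Real.sqrt (1 + T^2)
            ≤ ν ^ ((1:ℝ)/3) * (1500 * ν ^ ((-1:ℝ)/3)) := by
              apply mul_le_mul_of_nonneg_left hν23 (Real.rpow_nonneg hν.le _)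
          _ = 1500 * (ν ^ ((1:ℝ)/3) * ν ^ ((-1:ℝ)/3)) := by ring
          _ = 1500 := by rw [hcancel]; norm_num
      calc ν ^ ((1:ℝ)/3) ≤ 1500 * (1 / Real.sqrt (1 + T^2)) := hstep
        _ ≤ 1500 * (Real.sqrt (Nd K L η a) / Real.sqrt (Nd K L η b)) := by
            apply mul_le_mul_of_nonneg_left hlow (by norm_num)
    have : Real.sqrt (K^2 + (η - K*t)^2 + L^2) = Real.sqrt (Nd K L η t) := rfl
    rw [this]
    linarith [h1, h2]
  · -- empty case
    have hba : b < a := not_le.1 hab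
    have hm1 : mSymb ν k l η t = 1 := by
      rw [hm, Set.Ioc_eq_empty (not_lt.mpr hba.le), setIntegral_empty, Real.exp_zero]
    rw [hm1]
    constructor
    · have hν13 : ν ^ ((1:ℝ)/3) ≤ 1 :=
        Real.rpow_le_one hν.le hν1 (by norm_num)
      have hfrac : Real.sqrt (K^2 + L^2) / Real.sqrt (Nd K L η t) ≤ 1 :=
        (div_le_one (Real.sqrt_pos.mpr (Nd_pos hK L η t))).mpr (Real.sqrt_le_sqrt hSt)
      have : Real.sqrt (K^2 + (η - K*t)^2 + L^2) = Real.sqrt (Nd K L η t) := rfl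
      rw [this]
      linarith
    · norm_num
end

section
/- Let ν ∈ (0,1], let k ≠ 0 be an integer, and let t ≥ 0. Then there exists a universal constant C > 0 such that for all η, η′ ∈ ℝ and all integers l, l′ one has m(t; k, η, l) ≤ C · m(t; k, η′, l′) · √(1 + (η − η′)² + (l − l′)²). -/
open MeasureTheory Set intervalIntegral

namespace ProductEstimateAux

/-- clamp of `x` to `[0, t]`. -/
noncomputable def clampf (t x : ℝ) : ℝ := max 0 (min x t)

lemma clampf_mono {t x y : ℝ} (h : x ≤ y) : clampf t x ≤ clampf t y :=
  max_le_max le_rfl (min_le_min_right _ h)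

lemma clampf_lip {t x y : ℝ} (h : x ≤ y) :
    clampf t y - clampf t x ≤ y - x ∧ 0 ≤ clampf t y - clampf t x := by
  simp only [clampf, max_def, min_def]
  split_ifs <;> constructor <;> linarith

/-- Lipschitz property of `x ↦ x - clampf t x`, squared version. -/
lemma rho_sub_sq_le (t x y : ℝ) :
    ((x - clampf t x) - (y - clampf t y))^2 ≤ (x - y)^2 := by
  rcases le_total x y with h | h
  · obtain ⟨h1, h2⟩ := clampf_lip (t := t) h
    have hA1 : x - y ≤ (x - clampf t x) - (y - clampf t y) := by linarith
    have hA2 : (x - clampf t x) - (y - clampf t y) ≤ 0 := by linarith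
    have hxy : x - y ≤ 0 := le_trans hA1 hA2
    nlinarith [mul_nonneg (neg_nonneg.mpr hA2) (sub_nonneg.mpr hA1),
      mul_nonneg (neg_nonneg.mpr hxy) (sub_nonneg.mpr hA1)]
  · obtain ⟨h1, h2⟩ := clampf_lip (t := t) h
    have hA1 : (x - clampf t x) - (y - clampf t y) ≤ x - y := by linarith
    have hA2 : 0 ≤ (x - clampf t x) - (y - clampf t y) := by linarith
    have hxy : 0 ≤ x - y := le_trans hA2 hA1
    nlinarith [mul_nonneg hA2 (sub_nonneg.mpr hA1),
      mul_nonneg hxy (sub_nonneg.mpr hA1)]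

/-- Structural fact: `(x - clampf t x)^2 ≤ (x - clampf t (x+T))^2`. -/
lemma sq_clamp_le {t T : ℝ} (ht : 0 ≤ t) (hT : 0 ≤ T) (x : ℝ) :
    (x - clampf t x)^2 ≤ (x - clampf t (x + T))^2 := by
  rcases le_or_gt x t with h | h
  · have h1 : x ≤ clampf t x := by
      unfold clampf; rw [min_eq_left h]; exact le_max_right _ _
    have h2 : clampf t x ≤ clampf t (x + T) := clampf_mono (by linarith)
    nlinarith [mul_nonneg (sub_nonneg.mpr h2)
      (by linarith : (0:ℝ) ≤ -((x - clampf t x) + (x - clampf t (x + T))))]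
  · have e1 : clampf t x = t := by
      unfold clampf; rw [min_eq_right h.le, max_eq_right ht]
    have e2 : clampf t (x + T) = t := by
      unfold clampf; rw [min_eq_right (by linarith), max_eq_right ht]
    rw [e1, e2]

lemma hu_gen (K t : ℝ) (x y : ℝ) :
    ((K*x - K*clampf t x) - (K*y - K*clampf t y))^2 ≤ (K*x - K*y)^2 := by
  have h := rho_sub_sq_le t x y
  calc ((K*x - K*clampf t x) - (K*y - K*clampf t y))^2
      = K^2 * ((x - clampf t x) - (y - clampf t y))^2 := by ring
    _ ≤ K^2 * (x - y)^2 := mul_le_mul_of_nonneg_left h (sq_nonneg K)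
    _ = (K*x - K*y)^2 := by ring

lemma hv_gen (K t T : ℝ) (x y : ℝ) :
    ((K*x - K*clampf t (x+T)) - (K*y - K*clampf t (y+T)))^2 ≤ (K*x - K*y)^2 := by
  have h := rho_sub_sq_le t (x+T) (y+T)
  calc ((K*x - K*clampf t (x+T)) - (K*y - K*clampf t (y+T)))^2
      = K^2 * (((x+T) - clampf t (x+T)) - ((y+T) - clampf t (y+T)))^2 := by ring
    _ ≤ K^2 * ((x+T) - (y+T))^2 := mul_le_mul_of_nonneg_left h (sq_nonneg K)
    _ = (K*x - K*y)^2 := by ring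

lemma huv_gen (K t T : ℝ) (ht : 0 ≤ t) (hT : 0 ≤ T) (x : ℝ) :
    (K*x - K*clampf t x)^2 ≤ (K*x - K*clampf t (x+T))^2 := by
  have h := sq_clamp_le ht hT x
  calc (K*x - K*clampf t x)^2 = K^2 * (x - clampf t x)^2 := by ring
    _ ≤ K^2 * (x - clampf t (x+T))^2 := mul_le_mul_of_nonneg_left h (sq_nonneg K)
    _ = (K*x - K*clampf t (x+T))^2 := by ring

set_option maxHeartbeats 1000000 in
/-- The core algebraic inequality. -/
lemma core {κ2 κ'2 u v u' v' d2 L2 : ℝ}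
    (hκ : 1 ≤ κ2) (hκ' : 1 ≤ κ'2) (hd2 : 0 ≤ d2) (hL2 : 0 ≤ L2)
    (huv : u^2 ≤ v^2) (huv' : u'^2 ≤ v'^2)
    (hu : (u - u')^2 ≤ d2) (hv : (v - v')^2 ≤ d2)
    (hk1 : κ2 ≤ 2*κ'2 + 2*L2) (hk2 : κ'2 ≤ 2*κ2 + 2*L2) :
    (κ2 + u^2) * (κ'2 + v'^2) ≤ 16 * ((κ'2 + u'^2) * (κ2 + v^2)) * (1 + d2 + L2) := by
  have hu2 : u^2 ≤ 2*u'^2 + 2*d2 := by nlinarith [sq_nonneg (u - 2*u')]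
  have hv2 : v'^2 ≤ 2*v^2 + 2*d2 := by nlinarith [sq_nonneg (v' - 2*v)]
  have hP : κ2 + u^2 ≤ 2*(κ'2 + u'^2) + 2*(d2 + L2) := by linarith
  have hQ : κ'2 + v'^2 ≤ 2*(κ2 + v^2) + 2*(d2 + L2) := by linarith
  have hbase1 : 1 ≤ κ2 + v^2 := by nlinarith [sq_nonneg v]
  have hbase2 : 1 ≤ κ'2 + u'^2 := by nlinarith [sq_nonneg u']
  have hnn1 : (0:ℝ) ≤ κ'2 + v'^2 := by nlinarith [sq_nonneg v']
  have hnn2 : (0:ℝ) ≤ κ2 + v^2 := by linarith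
  rcases le_or_gt (d2 + L2) (3*(κ'2 + u'^2)) with hA | hA
  · have e1 : κ2 + u^2 ≤ 8*(κ'2 + u'^2) := by linarith
    have e2 : κ'2 + v'^2 ≤ 2*(κ2 + v^2)*(1 + d2 + L2) := by
      nlinarith [mul_nonneg (by linarith : (0:ℝ) ≤ d2 + L2)
        (by linarith : (0:ℝ) ≤ κ2 + v^2 - 1)]
    calc (κ2 + u^2) * (κ'2 + v'^2)
        ≤ (8*(κ'2 + u'^2)) * (2*(κ2 + v^2)*(1 + d2 + L2)) :=
          mul_le_mul e1 e2 hnn1 (by linarith : (0:ℝ) ≤ 8*(κ'2 + u'^2))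
      _ = 16 * ((κ'2 + u'^2) * (κ2 + v^2)) * (1 + d2 + L2) := by ring
  · rcases le_or_gt (d2 + L2) (3*(κ2 + v^2)) with hB | hB
    · have e1 : κ'2 + v'^2 ≤ 8*(κ2 + v^2) := by linarith
      have e2 : κ2 + u^2 ≤ 2*(κ'2 + u'^2)*(1 + d2 + L2) := by
        nlinarith [mul_nonneg (by linarith : (0:ℝ) ≤ d2 + L2)
          (by linarith : (0:ℝ) ≤ κ'2 + u'^2 - 1)]
      calc (κ2 + u^2) * (κ'2 + v'^2)
          ≤ (2*(κ'2 + u'^2)*(1 + d2 + L2)) * (8*(κ2 + v^2)) :=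
            mul_le_mul e2 e1 hnn1
              (show (0:ℝ) ≤ 2*(κ'2 + u'^2)*(1 + d2 + L2) by
                nlinarith [mul_nonneg (show (0:ℝ) ≤ κ'2 + u'^2 by linarith)
                  (show (0:ℝ) ≤ d2 + L2 by linarith)])
        _ = 16 * ((κ'2 + u'^2) * (κ2 + v^2)) * (1 + d2 + L2) := by ring
    · have h1 : κ2 + u^2 ≤ κ2 + v^2 := by linarith
      have h2 : κ'2 + v'^2 ≤ 3*(d2 + L2) := by nlinarith [sq_nonneg u']
      have h3 : (0:ℝ) ≤ (κ2 + v^2) * (16*(1 + d2 + L2)) :=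
        mul_nonneg hnn2 (by linarith)
      have h4 : 3*(d2 + L2) ≤ 16*(1 + d2 + L2) := by linarith
      have s1 : (κ2 + u^2) * (κ'2 + v'^2) ≤ (κ2 + v^2) * (3*(d2 + L2)) :=
        mul_le_mul h1 h2 hnn1 hnn2
      have s2 : (κ2 + v^2) * (3*(d2 + L2)) ≤ (κ2 + v^2) * (16*(1 + d2 + L2)) :=
        mul_le_mul_of_nonneg_left h4 hnn2
      have s3 : (κ2 + v^2) * (16*(1 + d2 + L2))
          ≤ (κ'2 + u'^2) * ((κ2 + v^2) * (16*(1 + d2 + L2))) := by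
        have h5 := mul_le_mul_of_nonneg_right hbase2 h3
        linarith [h5]
      have s4 : (κ'2 + u'^2) * ((κ2 + v^2) * (16*(1 + d2 + L2)))
          = 16 * ((κ'2 + u'^2) * (κ2 + v^2)) * (1 + d2 + L2) := by ring
      linarith [s1, s2, s3, s4.le]

/-- Evaluation of the interval integral of the indicator integrand. -/
lemma integral_eval (K L η t b₁ b₂ : ℝ) (hK : K ≠ 0) (ht : 0 ≤ t) (hb : b₁ ≤ b₂) :
    (∫ s in (0:ℝ)..t, Set.indicator (Set.Icc b₁ b₂)
        (fun s => K * (η - K * s) / (K^2 + (η - K * s)^2 + L^2)) s)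
      = (-(1/2) * Real.log (K^2 + (η - K * clampf t b₂)^2 + L^2))
        - (-(1/2) * Real.log (K^2 + (η - K * clampf t b₁)^2 + L^2)) := by
  have hK2 : (0:ℝ) < K^2 := lt_of_le_of_ne (sq_nonneg K) (Ne.symm (pow_ne_zero 2 hK))
  have hDpos : ∀ x : ℝ, 0 < K^2 + (η - K * x)^2 + L^2 := by
    intro x; nlinarith [sq_nonneg (η - K * x), sq_nonneg L]
  set g : ℝ → ℝ := fun s => K * (η - K * s) / (K^2 + (η - K * s)^2 + L^2) with hgdef
  set c := clampf t b₁ with hcdef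
  set d := clampf t b₂ with hddef
  have hc0 : 0 ≤ c := le_max_left _ _
  have hcd : c ≤ d := clampf_mono hb
  have hdt : d ≤ t := max_le ht (min_le_right _ _)
  have hgc : Continuous g := by
    apply Continuous.div
    · continuity
    · continuity
    · intro x; exact (hDpos x).ne'
  have hderiv : ∀ x : ℝ,
      HasDerivAt (fun y => -(1/2) * Real.log (K^2 + (η - K * y)^2 + L^2)) (g x) x := by
    intro x
    have h1 : HasDerivAt (fun y : ℝ => η - K * y) (-K) x := by
      simpa using ((hasDerivAt_id' x).const_mul K).const_sub η
    have h2 : HasDerivAt (fun y : ℝ => K^2 + (η - K * y)^2 + L^2)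
        (((2:ℕ) : ℝ) * (η - K * x)^1 * (-K)) x := ((h1.pow 2).const_add (K^2)).add_const (L^2)
    have h4 := (h2.log (hDpos x).ne').const_mul (-(1/2) : ℝ)
    refine h4.congr_deriv ?_
    have hD := (hDpos x).ne'
    simp only [hgdef]
    field_simp
    ring
  have hInt : ∀ x y : ℝ,
      IntervalIntegrable ((Set.Icc b₁ b₂).indicator g) volume x y := by
    intro x y
    rw [intervalIntegrable_iff]
    have h5 : IntervalIntegrable g volume x y := hgc.intervalIntegrable x y
    rw [intervalIntegrable_iff] at h5
    exact h5.indicator measurableSet_Icc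
  have hne : ∀ᵐ (x : ℝ) ∂volume, x ≠ c := by
    refine MeasureTheory.ae_iff.mpr ?_
    have he : {x : ℝ | ¬ x ≠ c} = {c} := by ext z; simp
    rw [he]; exact Real.volume_singleton
  have hz1 : (∫ s in (0:ℝ)..c, (Set.Icc b₁ b₂).indicator g s) = 0 := by
    have heq : (∫ s in (0:ℝ)..c, (Set.Icc b₁ b₂).indicator g s)
        = ∫ s in (0:ℝ)..c, (0:ℝ) := by
      apply intervalIntegral.integral_congr_ae
      filter_upwards [hne] with x hx hxI
      rw [Set.uIoc_of_le hc0] at hxI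
      have hx0 : 0 < x := hxI.1
      have hxc : x < c := lt_of_le_of_ne hxI.2 hx
      have hxb : x < b₁ := by
        have h5 : x < min b₁ t := by
          by_contra h6
          push_neg at h6
          have h7 : c ≤ x := by rw [hcdef]; exact max_le hx0.le h6
          linarith
        exact lt_of_lt_of_le h5 (min_le_left _ _)
      exact Set.indicator_of_notMem (fun hmem => absurd hmem.1 (not_le.mpr hxb)) _
    simpa using heq
  have hz2 : (∫ s in d..t, (Set.Icc b₁ b₂).indicator g s) = 0 := by
    have heq : (∫ s in d..t, (Set.Icc b₁ b₂).indicator g s)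
        = ∫ s in d..t, (0:ℝ) := by
      apply intervalIntegral.integral_congr_ae
      apply Filter.Eventually.of_forall
      intro x hxI
      rw [Set.uIoc_of_le hdt] at hxI
      have hxb : b₂ < x := by
        by_contra h6
        push_neg at h6
        have h7 : x ≤ d := by rw [hddef]; exact le_max_of_le_right (le_min h6 hxI.2)
        linarith [hxI.1]
      exact Set.indicator_of_notMem (fun hmem => absurd hmem.2 (not_le.mpr hxb)) _
    simpa using heq
  have hmid : (∫ s in c..d, (Set.Icc b₁ b₂).indicator g s) = ∫ s in c..d, g s := by
    apply intervalIntegral.integral_congr_ae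
    apply Filter.Eventually.of_forall
    intro x hxI
    rw [Set.uIoc_of_le hcd] at hxI
    obtain ⟨hcx, hxd⟩ := hxI
    have hx0 : 0 < x := lt_of_le_of_lt hc0 hcx
    have hb1x : b₁ ≤ x := by
      by_contra h6
      push_neg at h6
      have h7 : x ≤ c := by
        rw [hcdef]; exact le_max_of_le_right (le_min h6.le (le_trans hxd hdt))
      linarith
    have hxb2 : x ≤ b₂ := by
      have hd0 : 0 < d := lt_of_lt_of_le hx0 hxd
      have h8 : d = min b₂ t := by
        rcases max_choice 0 (min b₂ t) with h9 | h9
        · exfalso; rw [hddef] at hd0; unfold clampf at hd0; rw [h9] at hd0; exact lt_irrefl 0 hd0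
        · rw [hddef]; exact h9
      calc x ≤ d := hxd
        _ ≤ b₂ := by rw [h8]; exact min_le_left _ _
    exact Set.indicator_of_mem (Set.mem_Icc.mpr ⟨hb1x, hxb2⟩) _
  have hftc : (∫ s in c..d, g s)
      = (-(1/2) * Real.log (K^2 + (η - K * d)^2 + L^2))
        - (-(1/2) * Real.log (K^2 + (η - K * c)^2 + L^2)) :=
    intervalIntegral.integral_eq_sub_of_hasDerivAt (fun x _ => hderiv x)
      (hgc.intervalIntegrable c d)
  calc (∫ s in (0:ℝ)..t, (Set.Icc b₁ b₂).indicator g s)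
      = (∫ s in (0:ℝ)..c, (Set.Icc b₁ b₂).indicator g s)
        + (∫ s in c..t, (Set.Icc b₁ b₂).indicator g s) :=
        (intervalIntegral.integral_add_adjacent_intervals (hInt 0 c) (hInt c t)).symm
    _ = (∫ s in (0:ℝ)..c, (Set.Icc b₁ b₂).indicator g s)
        + ((∫ s in c..d, (Set.Icc b₁ b₂).indicator g s)
          + (∫ s in d..t, (Set.Icc b₁ b₂).indicator g s)) := by
        rw [intervalIntegral.integral_add_adjacent_intervals (hInt c d) (hInt d t)]
    _ = 0 + ((∫ s in c..d, g s) + 0) := by rw [hz1, hz2, hmid]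
    _ = (-(1/2) * Real.log (K^2 + (η - K * d)^2 + L^2))
        - (-(1/2) * Real.log (K^2 + (η - K * c)^2 + L^2)) := by rw [hftc]; ring

lemma mSymb_eq (ν : ℝ) (k l : ℤ) (hk : k ≠ 0) (η t : ℝ) (hν : 0 < ν) (ht : 0 ≤ t) :
    mSymb ν k l η t =
      Real.exp ((-(1/2) * Real.log ((k:ℝ)^2
          + (η - (k:ℝ) * clampf t (η / (k:ℝ) + 1000 * ν ^ ((-1 : ℝ)/3)))^2 + (l:ℝ)^2))
        - (-(1/2) * Real.log ((k:ℝ)^2 + (η - (k:ℝ) * clampf t (η / (k:ℝ)))^2 + (l:ℝ)^2))) := by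
  have hK : (k:ℝ) ≠ 0 := Int.cast_ne_zero.mpr hk
  have hT : (0:ℝ) ≤ 1000 * ν ^ ((-1 : ℝ)/3) := by positivity
  rw [mSymb, integral_eval (k:ℝ) (l:ℝ) η t _ _ hK ht (by linarith)]

lemma final_sqrt (P₁ Q₁ P₂ Q₂ d2 L2 : ℝ) (hP₁ : 0 < P₁) (hQ₁ : 0 < Q₁)
    (hP₂ : 0 < P₂) (hQ₂ : 0 < Q₂) (hd2 : 0 ≤ d2) (hL2 : 0 ≤ L2)
    (h : P₁ * Q₂ ≤ 16 * (P₂ * Q₁) * (1 + d2 + L2)) :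
    Real.exp (-(1/2) * Real.log Q₁ - -(1/2) * Real.log P₁) ≤
      4 * Real.exp (-(1/2) * Real.log Q₂ - -(1/2) * Real.log P₂) * Real.sqrt (1 + d2 + L2) := by
  have hexp : ∀ P Q : ℝ, 0 < P → 0 < Q →
      Real.exp (-(1/2) * Real.log Q - -(1/2) * Real.log P) = Real.sqrt (P / Q) := by
    intro P Q hP hQ
    have h1 : -(1/2) * Real.log Q - -(1/2) * Real.log P = Real.log (P / Q) * (1/2) := by
      rw [Real.log_div hP.ne' hQ.ne']; ring
    rw [h1, Real.sqrt_eq_rpow, Real.rpow_def_of_pos (div_pos hP hQ)]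
  rw [hexp P₁ Q₁ hP₁ hQ₁, hexp P₂ Q₂ hP₂ hQ₂]
  have hkey : P₁ / Q₁ ≤ 16 * (P₂ / Q₂) * (1 + d2 + L2) := by
    have h2 : P₁ / Q₁ ≤ (16 * P₂ * (1 + d2 + L2)) / Q₂ := by
      rw [div_le_div_iff₀ hQ₁ hQ₂]
      calc P₁ * Q₂ ≤ 16 * (P₂ * Q₁) * (1 + d2 + L2) := h
        _ = 16 * P₂ * (1 + d2 + L2) * Q₁ := by ring
    calc P₁ / Q₁ ≤ (16 * P₂ * (1 + d2 + L2)) / Q₂ := h2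
      _ = 16 * (P₂ / Q₂) * (1 + d2 + L2) := by ring
  have h16 : Real.sqrt 16 = 4 := by
    rw [show (16:ℝ) = 4^2 by norm_num]
    exact Real.sqrt_sq (by norm_num)
  calc Real.sqrt (P₁ / Q₁) ≤ Real.sqrt (16 * (P₂ / Q₂) * (1 + d2 + L2)) :=
        Real.sqrt_le_sqrt hkey
    _ = 4 * Real.sqrt (P₂ / Q₂) * Real.sqrt (1 + d2 + L2) := by
        rw [Real.sqrt_mul (by positivity) (1 + d2 + L2),
          Real.sqrt_mul (by norm_num : (0:ℝ) ≤ 16), h16]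

end ProductEstimateAux

set_option maxHeartbeats 2000000 in
open ProductEstimateAux in
/-- Product estimate: `m(t,k,η,l) ≤ C m(t,k,η',l') ⟨η-η', l-l'⟩`. -/
theorem product_estimate_m :
    ∃ C : ℝ, 0 < C ∧
      ∀ (ν : ℝ), 0 < ν → ν ≤ 1 →
      ∀ (k : ℤ), k ≠ 0 →
      ∀ (t : ℝ), 0 ≤ t →
      ∀ (η η' : ℝ) (l l' : ℤ),
        mSymb ν k l η t ≤
          C * mSymb ν k l' η' t *
            Real.sqrt (1 + (η - η')^2 + ((l:ℝ) - (l':ℝ))^2) := by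
  refine ⟨4, by norm_num, ?_⟩
  intro ν hν hν1 k hk t ht η η' l l'
  have hK : (k:ℝ) ≠ 0 := Int.cast_ne_zero.mpr hk
  have hK2 : (1:ℝ) ≤ (k:ℝ)^2 := by
    have h1 : (1:ℤ) ≤ |k| := Int.one_le_abs hk
    have h2 : (1:ℝ) ≤ |(k:ℝ)| := by exact_mod_cast h1
    nlinarith [sq_abs (k:ℝ), abs_nonneg (k:ℝ)]
  set T : ℝ := 1000 * ν ^ ((-1 : ℝ)/3) with hTdef
  have hT : (0:ℝ) ≤ T := by positivity
  rw [mSymb_eq ν k l hk η t hν ht, mSymb_eq ν k l' hk η' t hν ht]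
  have he : (k:ℝ) * (η / (k:ℝ)) = η := by field_simp
  have he' : (k:ℝ) * (η' / (k:ℝ)) = η' := by field_simp
  set c₁ := clampf t (η / (k:ℝ)) with hc₁
  set d₁ := clampf t (η / (k:ℝ) + T) with hd₁
  set c₂ := clampf t (η' / (k:ℝ)) with hc₂
  set d₂ := clampf t (η' / (k:ℝ) + T) with hd₂
  have hP₁ : (0:ℝ) < (k:ℝ)^2 + (η - (k:ℝ) * c₁)^2 + (l:ℝ)^2 := by
    nlinarith [sq_nonneg (η - (k:ℝ) * c₁), sq_nonneg ((l:ℝ))]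
  have hQ₁ : (0:ℝ) < (k:ℝ)^2 + (η - (k:ℝ) * d₁)^2 + (l:ℝ)^2 := by
    nlinarith [sq_nonneg (η - (k:ℝ) * d₁), sq_nonneg ((l:ℝ))]
  have hP₂ : (0:ℝ) < (k:ℝ)^2 + (η' - (k:ℝ) * c₂)^2 + (l':ℝ)^2 := by
    nlinarith [sq_nonneg (η' - (k:ℝ) * c₂), sq_nonneg ((l':ℝ))]
  have hQ₂ : (0:ℝ) < (k:ℝ)^2 + (η' - (k:ℝ) * d₂)^2 + (l':ℝ)^2 := by
    nlinarith [sq_nonneg (η' - (k:ℝ) * d₂), sq_nonneg ((l':ℝ))]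
  -- structural inequalities
  have huv : (η - (k:ℝ) * c₁)^2 ≤ (η - (k:ℝ) * d₁)^2 := by
    have h := huv_gen (k:ℝ) t T ht hT (η / (k:ℝ))
    rw [he] at h
    exact h
  have huv' : (η' - (k:ℝ) * c₂)^2 ≤ (η' - (k:ℝ) * d₂)^2 := by
    have h := huv_gen (k:ℝ) t T ht hT (η' / (k:ℝ))
    rw [he'] at h
    exact h
  have hu : ((η - (k:ℝ) * c₁) - (η' - (k:ℝ) * c₂))^2 ≤ (η - η')^2 := by
    have h := hu_gen (k:ℝ) t (η / (k:ℝ)) (η' / (k:ℝ))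
    rw [he, he'] at h
    exact h
  have hv : ((η - (k:ℝ) * d₁) - (η' - (k:ℝ) * d₂))^2 ≤ (η - η')^2 := by
    have h := hv_gen (k:ℝ) t T (η / (k:ℝ)) (η' / (k:ℝ))
    rw [he, he'] at h
    exact h
  have hcore := core (κ2 := (k:ℝ)^2 + (l:ℝ)^2) (κ'2 := (k:ℝ)^2 + (l':ℝ)^2)
    (u := η - (k:ℝ) * c₁) (v := η - (k:ℝ) * d₁)
    (u' := η' - (k:ℝ) * c₂) (v' := η' - (k:ℝ) * d₂)
    (d2 := (η - η')^2) (L2 := ((l:ℝ) - (l':ℝ))^2)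
    (by nlinarith [sq_nonneg ((l:ℝ))]) (by nlinarith [sq_nonneg ((l':ℝ))])
    (sq_nonneg _) (sq_nonneg _) huv huv' hu hv
    (by nlinarith [sq_nonneg ((l:ℝ) - 2*(l':ℝ))])
    (by nlinarith [sq_nonneg ((l':ℝ) - 2*(l:ℝ))])
  refine final_sqrt _ _ _ _ _ _ hP₁ hQ₁ hP₂ hQ₂ (sq_nonneg _) (sq_nonneg _) ?_
  calc ((k:ℝ)^2 + (η - (k:ℝ) * c₁)^2 + (l:ℝ)^2) * ((k:ℝ)^2 + (η' - (k:ℝ) * d₂)^2 + (l':ℝ)^2)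
      = (((k:ℝ)^2 + (l:ℝ)^2) + (η - (k:ℝ) * c₁)^2)
        * (((k:ℝ)^2 + (l':ℝ)^2) + (η' - (k:ℝ) * d₂)^2) := by ring
    _ ≤ 16 * ((((k:ℝ)^2 + (l':ℝ)^2) + (η' - (k:ℝ) * c₂)^2)
        * (((k:ℝ)^2 + (l:ℝ)^2) + (η - (k:ℝ) * d₁)^2))
        * (1 + (η - η')^2 + ((l:ℝ) - (l':ℝ))^2) := hcore
    _ = 16 * (((k:ℝ)^2 + (η' - (k:ℝ) * c₂)^2 + (l':ℝ)^2)
        * ((k:ℝ)^2 + (η - (k:ℝ) * d₁)^2 + (l:ℝ)^2))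
        * (1 + (η - η')^2 + ((l:ℝ) - (l':ℝ))^2) := by ring
end

section
/- Let ν ∈ (0,1], α > 0, let k ≠ 0 and l be integers, and let η ∈ ℝ. Set ρ_L(t) := √(k² + (η − kt)² + l²). Suppose Q, W : [0,∞) → ℂ are differentiable and solve the linearized nonzero-mode system in Fourier variables: Q′(t) = −ν ρ_L(t)² Q(t) − i α (l/ρ_L(t)) W(t) and W′(t) = −ν ρ_L(t)² W(t) − (k(η − kt)/ρ_L(t)²) W(t) − i α (l/ρ_L(t)) Q(t). Then for all t ≥ 0 one has m(t; k, η, l)² (|Q(t)|² + |W(t)|²) ≤ e^{−ν k² t³ / 12} (|Q(0)|² + |W(0)|²). -/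
/-- The moving-frame frequency modulus `ρ_L(t) = |(k, η - kt, l)|`. -/
noncomputable def rhoL (k l : ℤ) (η t : ℝ) : ℝ :=
  Real.sqrt ((k:ℝ)^2 + (η - (k:ℝ)*t)^2 + (l:ℝ)^2)

/-- The squared frequency modulus, as a polynomial. -/
noncomputable def edP (k l : ℤ) (η : ℝ) : ℝ → ℝ :=
  fun s => (k:ℝ)^2 + (η - (k:ℝ)*s)^2 + (l:ℝ)^2

/-- The symbol `k(η-ks)/ρ_L²`. -/
noncomputable def edc (k l : ℤ) (η : ℝ) : ℝ → ℝ :=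
  fun s => (k:ℝ) * (η - (k:ℝ) * s) / ((k:ℝ)^2 + (η - (k:ℝ) * s)^2 + (l:ℝ)^2)

/-- The integrand in the multiplier. -/
noncomputable def edg (ν : ℝ) (k l : ℤ) (η : ℝ) : ℝ → ℝ :=
  Set.indicator (Set.Icc (η / (k:ℝ)) (η / (k:ℝ) + 1000 * ν ^ ((-1 : ℝ)/3))) (edc k l η)

/-- The exponent in the multiplier. -/
noncomputable def edf (ν : ℝ) (k l : ℤ) (η : ℝ) : ℝ → ℝ :=
  fun t => ∫ s in (0:ℝ)..t, edg ν k l η s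

/-- An antiderivative of `ν ρ_L(t)²`. -/
noncomputable def edI (ν : ℝ) (k l : ℤ) (η : ℝ) : ℝ → ℝ :=
  fun t => ν * (((k:ℝ)^2 + (l:ℝ)^2 + η^2)*t - η*(k:ℝ)*t^2 + (k:ℝ)^2*t^3/3)

lemma mSymb_eq_s2 (ν : ℝ) (k l : ℤ) (η t : ℝ) :
    mSymb ν k l η t = Real.exp (edf ν k l η t) := rfl

lemma edP_pos {k : ℤ} (l : ℤ) (η : ℝ) (hk : k ≠ 0) (s : ℝ) : 0 < edP k l η s := by
  have hK : (k:ℝ) ≠ 0 := Int.cast_ne_zero.mpr hk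
  have h2 : 0 < (k:ℝ)^2 := by positivity
  unfold edP
  nlinarith [sq_nonneg (η - (k:ℝ)*s), sq_nonneg ((l:ℝ))]

lemma edc_cont {k : ℤ} (l : ℤ) (η : ℝ) (hk : k ≠ 0) : Continuous (edc k l η) := by
  unfold edc
  apply Continuous.div (by continuity) (by continuity)
  intro s
  exact (edP_pos l η hk s).ne'

lemma edg_intable (ν : ℝ) {k : ℤ} (l : ℤ) (η : ℝ) (hk : k ≠ 0) (x y : ℝ) :
    IntervalIntegrable (edg ν k l η) MeasureTheory.volume x y := by
  have hc := (edc_cont l η hk).intervalIntegrable (μ := MeasureTheory.volume) x y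
  exact ⟨hc.1.indicator measurableSet_Icc, hc.2.indicator measurableSet_Icc⟩

lemma edf_cont (ν : ℝ) {k : ℤ} (l : ℤ) (η : ℝ) (hk : k ≠ 0) :
    Continuous (edf ν k l η) :=
  intervalIntegral.continuous_primitive (edg_intable ν l η hk) 0

lemma edI_cont (ν : ℝ) (k l : ℤ) (η : ℝ) : Continuous (edI ν k l η) := by
  unfold edI; continuity

lemma edI_deriv (ν : ℝ) (k l : ℤ) (η : ℝ) (t : ℝ) :
    HasDerivAt (edI ν k l η) (ν * edP k l η t) t := by
  have h1 : HasDerivAt (fun u : ℝ => u) 1 t := hasDerivAt_id t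
  have h2 : HasDerivAt (fun u : ℝ => u^2) (2*t) t := by simpa using hasDerivAt_pow 2 t
  have h3 : HasDerivAt (fun u : ℝ => u^3) (3*t^2) t := by simpa using hasDerivAt_pow 3 t
  have hin : HasDerivAt
      (fun u : ℝ => ((k:ℝ)^2 + (l:ℝ)^2 + η^2)*u - η*(k:ℝ)*u^2 + (k:ℝ)^2*u^3/3)
      (((k:ℝ)^2 + (l:ℝ)^2 + η^2)*1 - η*(k:ℝ)*(2*t) + (k:ℝ)^2*(3*t^2)/3) t :=
    ((h1.const_mul ((k:ℝ)^2 + (l:ℝ)^2 + η^2)).sub (h2.const_mul (η*(k:ℝ)))).add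
      ((h3.const_mul ((k:ℝ)^2)).div_const 3)
  have := hin.const_mul ν
  exact this.congr_deriv (by unfold edP; ring)

lemma edg_continuousAt (ν : ℝ) {k : ℤ} (l : ℤ) (η : ℝ) (hν : 0 < ν) (hk : k ≠ 0)
    {t : ℝ} (htb : t ≠ η/(k:ℝ) + 1000*ν^((-1:ℝ)/3)) :
    ContinuousAt (edg ν k l η) t := by
  have hK : (k:ℝ) ≠ 0 := Int.cast_ne_zero.mpr hk
  have hT : 0 < 1000*ν^((-1:ℝ)/3) := by positivity
  rcases lt_trichotomy t (η/(k:ℝ)) with h | h | h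
  · have hev : (fun _ : ℝ => (0:ℝ)) =ᶠ[nhds t] edg ν k l η := by
      filter_upwards [Iio_mem_nhds h] with s hs
      have hns : s ∉ Set.Icc (η/(k:ℝ)) (η/(k:ℝ) + 1000*ν^((-1:ℝ)/3)) :=
        fun hmem => absurd hmem.1 (not_le.mpr hs)
      simp [edg, Set.indicator_of_notMem hns]
    exact continuousAt_const.congr hev
  · -- t = η/k : the function is continuous there since `edc (η/k) = 0`
    have hca : edc k l η t = 0 := by
      have h0 : η - (k:ℝ)*t = 0 := by rw [h]; field_simp; ring
      unfold edc; rw [h0]; simp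
    have hg0 : edg ν k l η t = 0 := by
      have hmem : t ∈ Set.Icc (η/(k:ℝ)) (η/(k:ℝ) + 1000*ν^((-1:ℝ)/3)) :=
        ⟨h.ge, by rw [h]; linarith⟩
      unfold edg; rw [Set.indicator_of_mem hmem]; exact hca
    unfold ContinuousAt
    rw [hg0]
    apply squeeze_zero_norm (a := fun s => ‖edc k l η s‖)
    · intro s
      exact norm_indicator_le_norm_self _ _
    · have h2 := ((edc_cont l η hk).norm.tendsto t)
      rwa [hca, norm_zero] at h2
  · rcases lt_trichotomy t (η/(k:ℝ) + 1000*ν^((-1:ℝ)/3)) with h2 | h2 | h2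
    · have hev : edc k l η =ᶠ[nhds t] edg ν k l η := by
        filter_upwards [Ioo_mem_nhds h h2] with s hs
        have hns : s ∈ Set.Icc (η/(k:ℝ)) (η/(k:ℝ) + 1000*ν^((-1:ℝ)/3)) :=
          ⟨hs.1.le, hs.2.le⟩
        simp [edg, Set.indicator_of_mem hns]
      exact ((edc_cont l η hk).continuousAt).congr hev
    · exact absurd h2 htb
    · have hev : (fun _ : ℝ => (0:ℝ)) =ᶠ[nhds t] edg ν k l η := by
        filter_upwards [Ioi_mem_nhds h2] with s hs
        have hns : s ∉ Set.Icc (η/(k:ℝ)) (η/(k:ℝ) + 1000*ν^((-1:ℝ)/3)) :=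
          fun hmem => absurd hmem.2 (not_le.mpr hs)
        simp [edg, Set.indicator_of_notMem hns]
      exact continuousAt_const.congr hev

lemma edf_deriv (ν : ℝ) {k : ℤ} (l : ℤ) (η : ℝ) (hν : 0 < ν) (hk : k ≠ 0)
    {t : ℝ} (htb : t ≠ η/(k:ℝ) + 1000*ν^((-1:ℝ)/3)) :
    HasDerivAt (edf ν k l η) (edg ν k l η t) t := by
  apply intervalIntegral.integral_hasDerivAt_right (edg_intable ν l η hk 0 t)
  · exact (((edc_cont l η hk).measurable.indicator
      measurableSet_Icc).aestronglyMeasurable).stronglyMeasurableAtFilter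
  · exact edg_continuousAt ν l η hν hk htb

/-- Derivative of the squared norm of a complex valued function. -/
lemma hasDerivAt_norm_sq_comp {F : ℝ → ℂ} {F' : ℂ} {t : ℝ} (h : HasDerivAt F F' t) :
    HasDerivAt (fun x => ‖F x‖^2)
      (2 * ((F t).re * F'.re + (F t).im * F'.im)) t := by
  have hre : HasDerivAt (fun x => (F x).re) F'.re t := by
    exact Complex.reCLM.hasFDerivAt.comp_hasDerivAt t h
  have him : HasDerivAt (fun x => (F x).im) F'.im t := by
    exact Complex.imCLM.hasFDerivAt.comp_hasDerivAt t h
  have h2 : HasDerivAt (fun x => (F x).re^2 + (F x).im^2)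
      ((2:ℕ) * (F t).re ^ 1 * F'.re + (2:ℕ) * (F t).im ^ 1 * F'.im) t :=
    (hre.pow 2).add (him.pow 2)
  have hfun : (fun x => ‖F x‖^2) = fun x => (F x).re^2 + (F x).im^2 := by
    funext x
    rw [Complex.sq_norm, Complex.normSq_apply]
    ring
  rw [hfun]
  convert h2 using 1
  push_cast
  ring

set_option maxHeartbeats 1000000 in
/-- Linear enhanced dissipation for the nonzero modes of the linearized
rotating Couette system in the good unknowns `(Q, W)`:
`m(t)² (|Q(t)|² + |W(t)|²) ≤ e^{-ν k² t³/12} (|Q(0)|² + |W(0)|²)`. -/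
theorem linear_enhanced_dissipation_nonzero_modes
    (ν α : ℝ) (hν : 0 < ν) (hν1 : ν ≤ 1) (hα : 0 < α)
    (k l : ℤ) (hk : k ≠ 0) (η : ℝ)
    (Q W : ℝ → ℂ)
    (hQ : ∀ t : ℝ, 0 ≤ t →
      HasDerivAt Q
        (-((ν * (rhoL k l η t)^2 : ℝ) : ℂ) * Q t
          - Complex.I * ((α * (l:ℝ) / rhoL k l η t : ℝ) : ℂ) * W t) t)
    (hW : ∀ t : ℝ, 0 ≤ t →
      HasDerivAt W
        (-((ν * (rhoL k l η t)^2 : ℝ) : ℂ) * W t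
          - (((k:ℝ) * (η - (k:ℝ)*t) / (rhoL k l η t)^2 : ℝ) : ℂ) * W t
          - Complex.I * ((α * (l:ℝ) / rhoL k l η t : ℝ) : ℂ) * Q t) t) :
    ∀ t : ℝ, 0 ≤ t →
      (mSymb ν k l η t)^2 * (‖Q t‖^2 + ‖W t‖^2)
        ≤ Real.exp (-(ν * (k:ℝ)^2 * t^3) / 12) * (‖Q 0‖^2 + ‖W 0‖^2) := by
  have hK : (k:ℝ) ≠ 0 := Int.cast_ne_zero.mpr hk
  have hK1 : (1:ℝ) ≤ (k:ℝ)^2 := by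
    have h1 : (1:ℤ) ≤ k ∨ k ≤ -1 := by omega
    rcases h1 with h1 | h1
    · have : (1:ℝ) ≤ (k:ℝ) := by exact_mod_cast h1
      nlinarith
    · have : (k:ℝ) ≤ -1 := by exact_mod_cast h1
      nlinarith
  obtain ⟨b, hb⟩ : ∃ b : ℝ, b = η/(k:ℝ) + 1000*ν^((-1:ℝ)/3) := ⟨_, rfl⟩
  have hTpos : 0 < 1000*ν^((-1:ℝ)/3) := by positivity
  have hT1000 : (1000:ℝ) ≤ 1000*ν^((-1:ℝ)/3) := by
    have h1 : (1:ℝ) ≤ ν^((-1:ℝ)/3) :=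
      Real.one_le_rpow_of_pos_of_le_one_of_nonpos hν hν1 (by norm_num)
    nlinarith
  obtain ⟨N, hN⟩ : ∃ N : ℝ → ℝ, N = fun u => ‖Q u‖^2 + ‖W u‖^2 := ⟨_, rfl⟩
  obtain ⟨H, hH⟩ : ∃ H : ℝ → ℝ,
      H = fun u => N u * Real.exp (2 * edf ν k l η u + edI ν k l η u) := ⟨_, rfl⟩
  -- derivative of N
  have hNd : ∀ u : ℝ, 0 ≤ u → HasDerivAt N
      (-2*(ν*edP k l η u)*N u - 2*(edc k l η u)*‖W u‖^2) u := by
    intro u hu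
    have hq := hQ u hu
    have hw := hW u hu
    have hru : rhoL k l η u ^ 2 = edP k l η u := by
      unfold rhoL edP
      exact Real.sq_sqrt (edP_pos l η hk u).le
    rw [hru] at hq hw
    have h1 := hasDerivAt_norm_sq_comp hq
    have h2 := hasDerivAt_norm_sq_comp hw
    have h12 := h1.add h2
    rw [hN]
    refine h12.congr_deriv ?_
    simp only [Complex.sub_re, Complex.sub_im, Complex.neg_re, Complex.neg_im,
      Complex.mul_re, Complex.mul_im, Complex.I_re, Complex.I_im,
      Complex.ofReal_re, Complex.ofReal_im, Complex.sq_norm,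
      Complex.normSq_apply]
    unfold edc edP
    ring
  -- derivative of H away from b
  obtain ⟨D, hD⟩ : ∃ D : ℝ → ℝ, D = fun u =>
      (-2*(ν*edP k l η u)*N u - 2*(edc k l η u)*‖W u‖^2) *
        Real.exp (2*edf ν k l η u + edI ν k l η u)
      + N u * (Real.exp (2*edf ν k l η u + edI ν k l η u) *
          (2*edg ν k l η u + ν*edP k l η u)) := ⟨_, rfl⟩
  have hHd : ∀ u : ℝ, 0 < u → u ≠ b → HasDerivAt H (D u) u := by
    intro u hu hub
    have h1 := hNd u hu.le
    have hfd : HasDerivAt (edf ν k l η) (edg ν k l η u) u :=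
      edf_deriv ν l η hν hk (by rw [← hb]; exact hub)
    have h2 := ((hfd.const_mul 2).add (edI_deriv ν k l η u)).exp
    rw [hH, hD]
    exact h1.mul h2
  -- the key sign condition
  have hkey : ∀ u : ℝ, 0 < u →
      2*(edg ν k l η u)*N u - 2*(edc k l η u)*‖W u‖^2 ≤ ν*edP k l η u*N u := by
    intro u hu
    have hQn : (0:ℝ) ≤ ‖Q u‖^2 := sq_nonneg _
    have hWn : (0:ℝ) ≤ ‖W u‖^2 := sq_nonneg _
    have hPu := edP_pos l η hk u
    have hη : (k:ℝ) * (η/(k:ℝ)) = η := by field_simp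
    by_cases hmem : u ∈ Set.Icc (η/(k:ℝ)) (η/(k:ℝ) + 1000*ν^((-1:ℝ)/3))
    · have hgu : edg ν k l η u = edc k l η u := Set.indicator_of_mem hmem _
      have hnum : (k:ℝ) * (η - (k:ℝ)*u) ≤ 0 := by
        have h1 : η/(k:ℝ) ≤ u := hmem.1
        have : (k:ℝ) * (η - (k:ℝ)*u) = (k:ℝ)^2 * (η/(k:ℝ) - u) := by
          field_simp
        rw [this]
        apply mul_nonpos_of_nonneg_of_nonpos (by positivity)
        linarith
      have hcle : edc k l η u ≤ 0 := by
        unfold edc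
        apply div_nonpos_of_nonpos_of_nonneg hnum
        have := edP_pos l η hk u
        unfold edP at this; linarith
      simp only [hgu, hN]
      have hPN : edP k l η u > 0 := hPu
      nlinarith [mul_nonneg (mul_nonneg hν.le hPN.le)
        (add_nonneg hQn hWn), mul_nonpos_of_nonpos_of_nonneg hcle hQn]
    · have hgu : edg ν k l η u = 0 := Set.indicator_of_notMem hmem _
      simp only [hgu, hN]
      rcases lt_or_ge u (η/(k:ℝ)) with hlt | hge
      · -- u < η/k ; here edc u ≥ 0
        have hcge : 0 ≤ edc k l η u := by
          unfold edc
          apply div_nonneg _ (by unfold edP at hPu; linarith)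
          have : (k:ℝ) * (η - (k:ℝ)*u) = (k:ℝ)^2 * (η/(k:ℝ) - u) := by
            field_simp
          rw [this]
          apply mul_nonneg (by positivity)
          linarith
        nlinarith [mul_nonneg (mul_nonneg hν.le hPu.le) (add_nonneg hQn hWn),
          mul_nonneg hcge hWn]
      · -- u > b ; here |edc| is tiny compared with ν edP
        have hgt : η/(k:ℝ) + 1000*ν^((-1:ℝ)/3) < u := by
          by_contra hle
          push_neg at hle
          exact hmem ⟨hge, hle⟩
        set s : ℝ := u - η/(k:ℝ) with hs
        have hsT : 1000*ν^((-1:ℝ)/3) < s := by rw [hs]; linarith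
        have hs0 : 0 < s := lt_trans hTpos hsT
        have he : η - (k:ℝ)*u = -((k:ℝ)*s) := by rw [hs]; field_simp; ring
        have hPform : edP k l η u = (k:ℝ)^2 + (k:ℝ)^2*s^2 + (l:ℝ)^2 := by
          unfold edP; rw [he]; ring
        have hcform : edc k l η u = -((k:ℝ)^2*s) / edP k l η u := by
          unfold edc edP; rw [he]; ring_nf
        have hT3 : ν * (1000*ν^((-1:ℝ)/3))^3 = 1000000000 := by
          rw [mul_pow, ← Real.rpow_natCast (ν ^ ((-1:ℝ)/3)) 3, ← Real.rpow_mul hν.le]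
          norm_num
          rw [Real.rpow_neg_one]
          field_simp
        have hcube : (1000000000:ℝ) ≤ ν * s^3 := by
          have h1 : (1000*ν^((-1:ℝ)/3))^3 ≤ s^3 := by
            apply pow_le_pow_left₀ hTpos.le hsT.le
          calc (1000000000:ℝ) = ν * (1000*ν^((-1:ℝ)/3))^3 := hT3.symm
            _ ≤ ν * s^3 := by nlinarith
        have hP1 : (k:ℝ)^2*s^2 ≤ edP k l η u := by
          rw [hPform]; nlinarith [sq_nonneg ((l:ℝ))]
        have hquart : 2*(k:ℝ)^2*s ≤ ν * (edP k l η u)^2 := by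
          have e1 : ν * ((k:ℝ)^2*s^2)^2 ≤ ν * (edP k l η u)^2 := by
            apply mul_le_mul_of_nonneg_left _ hν.le
            apply pow_le_pow_left₀ (by positivity) hP1
          have e2 : (1000000000:ℝ) * ((k:ℝ)^4 * s) ≤ ν * ((k:ℝ)^2*s^2)^2 := by
            have hrw : ν * ((k:ℝ)^2*s^2)^2 = (ν*s^3) * ((k:ℝ)^4*s) := by ring
            rw [hrw]
            apply mul_le_mul_of_nonneg_right hcube (by positivity)
          have e3 : 2*(k:ℝ)^2*s ≤ (1000000000:ℝ) * ((k:ℝ)^4 * s) := by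
            nlinarith [mul_nonneg (mul_nonneg (sq_nonneg (k:ℝ))
              (sub_nonneg.mpr hK1)) hs0.le, mul_nonneg (sq_nonneg (k:ℝ)) hs0.le]
          linarith
        have hcb : -(2*edc k l η u) ≤ ν * edP k l η u := by
          have h2 : -(2 * edc k l η u) = 2*((k:ℝ)^2*s) / edP k l η u := by
            rw [hcform]; ring
          rw [h2, div_le_iff₀ hPu]
          nlinarith [hquart]
        nlinarith [mul_nonneg (mul_nonneg hν.le hPu.le) hQn,
          mul_le_mul_of_nonneg_right hcb hWn,
          mul_nonneg (mul_nonneg hν.le hPu.le) hWn]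
  -- D is nonpositive
  have hDnp : ∀ u : ℝ, 0 < u → D u ≤ 0 := by
    intro u hu
    simp only [hD]
    have hexp : 0 < Real.exp (2*edf ν k l η u + edI ν k l η u) := Real.exp_pos _
    have hident :
        (-2*(ν*edP k l η u)*N u - 2*(edc k l η u)*‖W u‖^2) *
          Real.exp (2*edf ν k l η u + edI ν k l η u)
        + N u * (Real.exp (2*edf ν k l η u + edI ν k l η u) *
            (2*edg ν k l η u + ν*edP k l η u))
        = Real.exp (2*edf ν k l η u + edI ν k l η u) *
            ((2*(edg ν k l η u)*N u - 2*(edc k l η u)*‖W u‖^2) - ν*edP k l η u*N u) := by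
      ring
    rw [hident]
    apply mul_nonpos_of_nonneg_of_nonpos hexp.le
    have := hkey u hu
    linarith
  -- continuity of H on [0, ∞)
  have hHcont : ContinuousOn H (Set.Ici (0:ℝ)) := by
    rw [hH]
    apply ContinuousOn.mul
    · rw [hN]
      intro u hu
      exact (((hQ u hu).continuousAt.continuousWithinAt.norm.pow 2).add
        ((hW u hu).continuousAt.continuousWithinAt.norm.pow 2))
    · apply Continuous.continuousOn
      exact Real.continuous_exp.comp
        ((continuous_const.mul (edf_cont ν l η hk)).add (edI_cont ν k l η))
  -- antitonicity of H on [0, ∞) split at b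
  set m : ℝ := max b 0 with hm
  have hm0 : (0:ℝ) ≤ m := le_max_right _ _
  have A1 : AntitoneOn H (Set.Icc 0 m) := by
    apply antitoneOn_of_hasDerivWithinAt_nonpos (convex_Icc 0 m)
      (hHcont.mono (fun x hx => hx.1)) (f' := D)
    · intro x hx
      rw [interior_Icc] at hx
      have hxb : x ≠ b := by
        intro hxb
        rcases le_or_gt b 0 with h | h
        · linarith [hx.1, hxb ▸ h]
        · have : m = b := max_eq_left h.le
          rw [this] at hx
          exact absurd hxb (ne_of_lt hx.2)
      exact (hHd x hx.1 hxb).hasDerivWithinAt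
    · intro x hx
      rw [interior_Icc] at hx
      exact hDnp x hx.1
  have A2 : AntitoneOn H (Set.Ici m) := by
    apply antitoneOn_of_hasDerivWithinAt_nonpos (convex_Ici m)
      (hHcont.mono (fun x hx => le_trans hm0 hx)) (f' := D)
    · intro x hx
      rw [interior_Ici, Set.mem_Ioi] at hx
      have hx0 : 0 < x := lt_of_le_of_lt hm0 hx
      have hxb : x ≠ b := by
        intro hxb
        have hbm : b ≤ m := le_max_left _ _
        rw [hxb] at hx
        linarith
      exact (hHd x hx0 hxb).hasDerivWithinAt
    · intro x hx
      rw [interior_Ici, Set.mem_Ioi] at hx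
      exact hDnp x (lt_of_le_of_lt hm0 hx)
  have hHle : ∀ t : ℝ, 0 ≤ t → H t ≤ H 0 := by
    intro t ht
    rcases le_total t m with h | h
    · exact A1 ⟨le_refl 0, hm0⟩ ⟨ht, h⟩ ht
    · calc H t ≤ H m := A2 (Set.self_mem_Ici) h h
        _ ≤ H 0 := A1 ⟨le_refl 0, hm0⟩ ⟨hm0, le_refl m⟩ hm0
  -- initial values
  have hf0 : edf ν k l η 0 = 0 := by
    unfold edf; exact intervalIntegral.integral_same
  have hI0 : edI ν k l η 0 = 0 := by unfold edI; ring
  have hH0val : H 0 = N 0 := by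
    rw [hH]; simp [hf0, hI0]
  have hNnn : ∀ u : ℝ, 0 ≤ N u := by
    intro u; rw [hN]; positivity
  -- conclusion
  intro t ht
  rw [mSymb_eq_s2,
    show ‖Q t‖^2 + ‖W t‖^2 = N t from by rw [hN],
    show ‖Q 0‖^2 + ‖W 0‖^2 = N 0 from by rw [hN]]
  have hIlow : ν * (k:ℝ)^2 * t^3 / 12 ≤ edI ν k l η t := by
    unfold edI
    nlinarith [mul_nonneg hν.le (mul_nonneg ht (sq_nonneg (η - (k:ℝ)*t/2))),
      mul_nonneg hν.le (mul_nonneg (sq_nonneg (k:ℝ)) ht),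
      mul_nonneg hν.le (mul_nonneg (sq_nonneg (l:ℝ)) ht)]
  have hexp2 : Real.exp (edf ν k l η t)^2 = Real.exp (2*edf ν k l η t) := by
    rw [sq, ← Real.exp_add]; ring_nf
  have hkeyid : Real.exp (edf ν k l η t)^2 * N t
      = H t * Real.exp (-(edI ν k l η t)) := by
    rw [hexp2, hH]
    simp only
    rw [mul_assoc, ← Real.exp_add, add_neg_cancel_right]
    ring
  rw [hkeyid]
  calc H t * Real.exp (-(edI ν k l η t))
      ≤ H 0 * Real.exp (-(edI ν k l η t)) := by
        apply mul_le_mul_of_nonneg_right (hHle t ht) (Real.exp_nonneg _)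
    _ = N 0 * Real.exp (-(edI ν k l η t)) := by rw [hH0val]
    _ ≤ N 0 * Real.exp (-(ν * (k:ℝ)^2 * t^3) / 12) := by
        apply mul_le_mul_of_nonneg_left _ (hNnn 0)
        apply Real.exp_le_exp.mpr
        linarith
    _ = Real.exp (-(ν * (k:ℝ)^2 * t^3) / 12) * N 0 := mul_comm _ _
end

section
/- Let ν ∈ (0,1], let k ≠ 0 and l be integers, and let η ∈ ℝ. Then for all t ≥ 0 one has m(t; k, η, l) ≥ √(k² + l²) / √(k² + (η − kt)² + l²). -/
/-- Sharp lower bound of `m` by the frequency ratio: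
`m(t;k,η,l) ≥ |(k,l)| / |(k, η - kt, l)|`. -/
theorem m_lower_bound_ratio
    (ν : ℝ) (hν : 0 < ν) (hν1 : ν ≤ 1)
    (k l : ℤ) (hk : k ≠ 0) (η : ℝ) :
    ∀ t : ℝ, 0 ≤ t →
      Real.sqrt ((k:ℝ)^2 + (l:ℝ)^2) /
          Real.sqrt ((k:ℝ)^2 + (η - (k:ℝ)*t)^2 + (l:ℝ)^2)
        ≤ mSymb ν k l η t := by
  intro t ht
  have hkR : (k:ℝ) ≠ 0 := Int.cast_ne_zero.mpr hk
  have hk2 : (0:ℝ) < (k:ℝ)^2 := by positivity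
  set a : ℝ := η / (k:ℝ) with ha
  set b : ℝ := a + 1000 * ν ^ ((-1 : ℝ)/3) with hb
  have hab : a < b := by
    have h : (0:ℝ) < 1000 * ν ^ ((-1 : ℝ)/3) := by positivity
    rw [hb]
    linarith
  set F : ℝ → ℝ := fun s => (k:ℝ)^2 + (η - (k:ℝ)*s)^2 + (l:ℝ)^2 with hFdef
  have hF : ∀ s, 0 < F s := by
    intro s
    have h1 : (0:ℝ) ≤ (η - (k:ℝ)*s)^2 := sq_nonneg _
    have h2 : (0:ℝ) ≤ (l:ℝ)^2 := sq_nonneg _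
    simp only [hFdef]
    linarith
  set f : ℝ → ℝ := fun s => (k:ℝ) * (η - (k:ℝ)*s) / F s with hfdef
  set G : ℝ → ℝ := fun s => -(1/2) * Real.log (F s) with hGdef
  set c : ℝ → ℝ := fun x => min (max x a) b with hcdef
  -- derivative
  have hderiv : ∀ x : ℝ, HasDerivAt G (f x) x := by
    intro x
    have h1 : HasDerivAt (fun s : ℝ => η - (k:ℝ)*s) (-(k:ℝ)) x := by
      simpa using ((hasDerivAt_id x).const_mul (k:ℝ)).const_sub η
    have hFd : HasDerivAt F (2 * (η - (k:ℝ)*x) * (-(k:ℝ))) x := by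
      have := ((h1.pow 2).const_add ((k:ℝ)^2)).add_const ((l:ℝ)^2)
      simpa [hFdef] using this
    have := (hFd.log (hF x).ne').const_mul (-(1/2) : ℝ)
    refine this.congr_deriv ?_
    simp only [hfdef]
    field_simp
  have hcont : Continuous f := by
    apply Continuous.div
    · continuity
    · simp only [hFdef]; continuity
    · exact fun s => (hF s).ne'
  have hftc : ∀ u v : ℝ, (∫ s in u..v, f s) = G v - G u := fun u v =>
    intervalIntegral.integral_eq_sub_of_hasDerivAt (fun x _ => hderiv x)
      (hcont.intervalIntegrable u v)
  -- clamp facts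
  have hc0t : c 0 ≤ c t :=
    min_le_min (max_le_max ht le_rfl) le_rfl
  -- the integral of the indicator
  have hmem : ∀ s : ℝ, s ≠ a →
      (s ∈ Set.Icc a b ∩ Set.Ioc 0 t ↔ s ∈ Set.Ioc (c 0) (c t)) := by
    intro s hs
    simp only [Set.mem_inter_iff, Set.mem_Icc, Set.mem_Ioc, hcdef]
    constructor
    · rintro ⟨⟨h1, h2⟩, h3, h4⟩
      have has : a < s := lt_of_le_of_ne h1 (Ne.symm hs)
      exact ⟨lt_of_le_of_lt (min_le_left _ _) (max_lt h3 has),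
        le_min (le_trans h4 (le_max_left _ _)) h2⟩
    · rintro ⟨h1, h2⟩
      have hsb : s ≤ b := le_trans h2 (min_le_right _ _)
      have h01 : max 0 a < s := by
        rcases min_lt_iff.mp h1 with h | h
        · exact h
        · linarith
      obtain ⟨h0s, has⟩ := max_lt_iff.mp h01
      have hst : s ≤ t := by
        rcases le_max_iff.mp (le_trans h2 (min_le_left _ _)) with h | h
        · exact h
        · linarith
      exact ⟨⟨has.le, hsb⟩, h0s, hst⟩
  have haeeq : (Set.Icc a b ∩ Set.Ioc 0 t : Set ℝ) =ᵐ[MeasureTheory.volume]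
      Set.Ioc (c 0) (c t) := by
    rw [MeasureTheory.ae_eq_set]
    constructor
    · refine MeasureTheory.measure_mono_null (fun s hs => ?_)
        (MeasureTheory.measure_singleton a)
      by_contra h
      rw [Set.mem_singleton_iff] at h
      exact hs.2 ((hmem s h).mp hs.1)
    · refine MeasureTheory.measure_mono_null (fun s hs => ?_)
        (MeasureTheory.measure_singleton a)
      by_contra h
      rw [Set.mem_singleton_iff] at h
      exact hs.2 ((hmem s h).mpr hs.1)
  have hind : mSymb ν k l η t = Real.exp (∫ s in (c 0)..(c t), f s) := by
    unfold mSymb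
    congr 1
    rw [intervalIntegral.integral_of_le ht, intervalIntegral.integral_of_le hc0t]
    rw [MeasureTheory.integral_indicator measurableSet_Icc]
    rw [MeasureTheory.Measure.restrict_restrict measurableSet_Icc]
    exact MeasureTheory.setIntegral_congr_set haeeq
  -- compute m
  have hexp : mSymb ν k l η t = Real.sqrt (F (c 0)) / Real.sqrt (F (c t)) := by
    rw [hind, hftc (c 0) (c t)]
    rw [Real.sqrt_eq_rpow, Real.sqrt_eq_rpow,
      Real.rpow_def_of_pos (hF (c 0)), Real.rpow_def_of_pos (hF (c t)),
      ← Real.exp_sub]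
    congr 1
    simp only [hGdef]
    ring
  rw [hexp]
  -- final inequality
  have hFc0 : (k:ℝ)^2 + (l:ℝ)^2 ≤ F (c 0) := by
    have := sq_nonneg (η - (k:ℝ) * c 0)
    simp only [hFdef]
    linarith
  have hη : η = (k:ℝ) * a := by
    rw [ha, mul_div_cancel₀ _ hkR]
  have hsq : (a - c t)^2 ≤ (a - t)^2 := by
    rcases le_total t a with h | h
    · have hct : c t = a := by
        simp only [hcdef]
        rw [max_eq_right h, min_eq_left hab.le]
      rw [hct]
      simp [sq_nonneg]
    · have h1 : a ≤ c t := le_min (le_trans h (le_max_left _ _)) hab.le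
      have h2 : c t ≤ t := le_trans (min_le_left _ _) (le_of_eq (max_eq_left h))
      nlinarith
  have hFct : F (c t) ≤ F t := by
    have hkey : ((k:ℝ) * a - (k:ℝ) * c t)^2 ≤ ((k:ℝ) * a - (k:ℝ) * t)^2 := by
      calc ((k:ℝ) * a - (k:ℝ) * c t)^2 = (k:ℝ)^2 * (a - c t)^2 := by ring
        _ ≤ (k:ℝ)^2 * (a - t)^2 := mul_le_mul_of_nonneg_left hsq hk2.le
        _ = ((k:ℝ) * a - (k:ℝ) * t)^2 := by ring
    have hkey2 : (η - (k:ℝ) * c t)^2 ≤ (η - (k:ℝ) * t)^2 := by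
      rw [hη]; exact hkey
    simp only [hFdef]
    linarith
  have hA : (0:ℝ) ≤ (k:ℝ)^2 + (l:ℝ)^2 := by positivity
  rw [div_le_div_iff₀ (Real.sqrt_pos.mpr (hF t)) (Real.sqrt_pos.mpr (hF (c t)))]
  rw [← Real.sqrt_mul hA, ← Real.sqrt_mul (hF (c 0)).le]
  apply Real.sqrt_le_sqrt
  calc ((k:ℝ)^2 + (l:ℝ)^2) * F (c t) ≤ F (c 0) * F (c t) :=
        mul_le_mul_of_nonneg_right hFc0 (hF (c t)).le
    _ ≤ F (c 0) * F t := mul_le_mul_of_nonneg_left hFct (hF (c 0)).le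
end

section
/- Let ν ∈ (0,1], let k ≠ 0 and l be integers, and let η, t ≥ 0 be real numbers. Set ρ_L := √(k² + (η − kt)² + l²). Then |l| / ((k² + l²) ρ_L) ≤ m(t; k, η, l) and |k| |η − kt| / ((k² + l²) ρ_L²) ≤ m(t; k, η, l). -/
set_option maxHeartbeats 1600000 in
/-- The symbols arising in the reconstruction of `U¹, U³` from the good
unknowns are dominated by `m`:
`|l|/((k²+l²)ρ_L) ≤ m` and `|k||η-kt|/((k²+l²)ρ_L²) ≤ m`. -/
theorem reconstruction_symbols_dominated_by_m
    (ν : ℝ) (hν : 0 < ν) (hν1 : ν ≤ 1)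
    (k l : ℤ) (hk : k ≠ 0) (η t : ℝ) (ht : 0 ≤ t) :
    |(l:ℝ)| / (((k:ℝ)^2 + (l:ℝ)^2) *
        Real.sqrt ((k:ℝ)^2 + (η - (k:ℝ)*t)^2 + (l:ℝ)^2))
      ≤ mSymb ν k l η t
    ∧ |(k:ℝ)| * |η - (k:ℝ)*t| / (((k:ℝ)^2 + (l:ℝ)^2) *
        ((k:ℝ)^2 + (η - (k:ℝ)*t)^2 + (l:ℝ)^2))
      ≤ mSymb ν k l η t := by
  have hkR : ((k:ℝ)) ≠ 0 := Int.cast_ne_zero.mpr hk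
  have hk1 : (1:ℝ) ≤ (k:ℝ)^2 := by
    have h : (1:ℤ) ≤ k^2 := by rcases hk.lt_or_gt with h | h <;> nlinarith
    exact_mod_cast h
  set c : ℝ := η / (k:ℝ) with hc
  set f : ℝ → ℝ := fun s => (k:ℝ) * (η - (k:ℝ) * s) /
        ((k:ℝ)^2 + (η - (k:ℝ) * s)^2 + (l:ℝ)^2) with hfdef
  set g : ℝ → ℝ := fun s =>
    Set.indicator (Set.Icc c (c + 1000 * ν ^ ((-1 : ℝ)/3))) f s with hgdef
  have hmeq : mSymb ν k l η t = Real.exp (∫ s in (0:ℝ)..t, g s) := rfl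
  have hXpos : ∀ s : ℝ, 0 < (k:ℝ)^2 + (η - (k:ℝ)*s)^2 + (l:ℝ)^2 := fun s => by
    nlinarith [sq_nonneg (η - (k:ℝ)*s), sq_nonneg (l:ℝ)]
  have hfc : Continuous f := by
    rw [hfdef]
    exact Continuous.div (by fun_prop) (by fun_prop) fun s => (hXpos s).ne'
  have hfint : ∀ u v : ℝ, IntervalIntegrable f MeasureTheory.volume u v :=
    fun u v => hfc.intervalIntegrable u v
  have hgint : ∀ u v : ℝ, IntervalIntegrable g MeasureTheory.volume u v := by
    intro u v
    have h := hfint u v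
    rw [intervalIntegrable_iff] at h ⊢
    exact h.indicator measurableSet_Icc
  have hηc : η = (k:ℝ) * c := by rw [hc]; field_simp
  have hfnum : ∀ s : ℝ, (k:ℝ) * (η - (k:ℝ)*s) = (k:ℝ)^2 * (c - s) := by
    intro s; rw [hηc]; ring
  have hf_nonneg : ∀ s : ℝ, s ≤ c → 0 ≤ f s := by
    intro s hs
    rw [hfdef]
    apply div_nonneg _ (hXpos s).le
    rw [hfnum s]
    exact mul_nonneg (sq_nonneg _) (by linarith)
  have hf_nonpos : ∀ s : ℝ, c ≤ s → f s ≤ 0 := by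
    intro s hs
    rw [hfdef]
    apply div_nonpos_of_nonpos_of_nonneg _ (hXpos s).le
    rw [hfnum s]
    exact mul_nonpos_of_nonneg_of_nonpos (sq_nonneg _) (by linarith)
  have hg_nonneg : ∀ s : ℝ, s ≤ c → 0 ≤ g s := by
    intro s hs
    rw [hgdef]
    simp only [Set.indicator_apply]
    split
    · exact hf_nonneg s hs
    · exact le_refl 0
  have hg_ge_f : ∀ s : ℝ, c ≤ s → f s ≤ g s := by
    intro s hs
    rw [hgdef]
    simp only [Set.indicator_apply]
    split
    · exact le_refl _
    · exact hf_nonpos s hs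
  have hder : ∀ s : ℝ, HasDerivAt
      (fun s => -(1/2) * Real.log ((k:ℝ)^2 + (η - (k:ℝ)*s)^2 + (l:ℝ)^2)) (f s) s := by
    intro s
    have h1 : HasDerivAt (fun s : ℝ => η - (k:ℝ)*s) (-(k:ℝ)) s := by
      simpa using ((hasDerivAt_id s).const_mul (k:ℝ)).const_sub η
    have hX : HasDerivAt (fun s : ℝ => (k:ℝ)^2 + (η - (k:ℝ)*s)^2 + (l:ℝ)^2)
        ((2:ℕ) * (η - (k:ℝ)*s)^(2-1) * (-(k:ℝ))) s :=
      ((h1.pow 2).const_add ((k:ℝ)^2)).add_const ((l:ℝ)^2)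
    have hlog := hX.log (hXpos s).ne'
    have h2 := hlog.const_mul (-(1/2:ℝ))
    refine h2.congr_deriv ?_
    rw [hfdef]
    field_simp
    ring
  have hcalc : ∀ u v : ℝ, (∫ s in u..v, f s) =
      -(1/2) * Real.log ((k:ℝ)^2 + (η - (k:ℝ)*v)^2 + (l:ℝ)^2)
      - (-(1/2) * Real.log ((k:ℝ)^2 + (η - (k:ℝ)*u)^2 + (l:ℝ)^2)) :=
    fun u v => intervalIntegral.integral_eq_sub_of_hasDerivAt (fun s _ => hder s) (hfint u v)
  set K : ℝ := (k:ℝ)^2 + (l:ℝ)^2 with hKdef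
  set R : ℝ := (k:ℝ)^2 + (η - (k:ℝ)*t)^2 + (l:ℝ)^2 with hRdef
  have hK1 : (1:ℝ) ≤ K := by rw [hKdef]; nlinarith [sq_nonneg (l:ℝ)]
  have hKR : K ≤ R := by rw [hKdef, hRdef]; nlinarith [sq_nonneg (η - (k:ℝ)*t)]
  have hKpos : (0:ℝ) < K := by linarith
  have hRpos : (0:ℝ) < R := by linarith
  have hsK : Real.sqrt K * Real.sqrt K = K := Real.mul_self_sqrt hKpos.le
  have hsR : Real.sqrt R * Real.sqrt R = R := Real.mul_self_sqrt hRpos.le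
  have hsKpos : 0 < Real.sqrt K := Real.sqrt_pos.mpr hKpos
  have hsRpos : 0 < Real.sqrt R := Real.sqrt_pos.mpr hRpos
  have hlK : |(l:ℝ)| ≤ Real.sqrt K := by
    rw [← Real.sqrt_sq_eq_abs]
    exact Real.sqrt_le_sqrt (by rw [hKdef]; nlinarith)
  have hkK : |(k:ℝ)| ≤ Real.sqrt K := by
    rw [← Real.sqrt_sq_eq_abs]
    exact Real.sqrt_le_sqrt (by rw [hKdef]; nlinarith [sq_nonneg (l:ℝ)])
  have hetaR : |η - (k:ℝ)*t| ≤ Real.sqrt R := by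
    rw [← Real.sqrt_sq_eq_abs]
    exact Real.sqrt_le_sqrt (by rw [hRdef]; nlinarith [sq_nonneg (l:ℝ)])
  have hsKR : Real.sqrt K ≤ Real.sqrt R := Real.sqrt_le_sqrt hKR
  have hmain : Real.sqrt K / Real.sqrt R ≤ mSymb ν k l η t := by
    rw [hmeq]
    have hzero : ∀ᵐ s : ℝ ∂MeasureTheory.volume, s ≠ 0 := by
      rw [MeasureTheory.ae_iff]
      simp
    have hIlb : (1/2) * Real.log K - (1/2) * Real.log R ≤ ∫ s in (0:ℝ)..t, g s := by
      have hlogKR : Real.log K ≤ Real.log R := Real.log_le_log hKpos hKR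
      rcases le_or_gt t (max 0 c) with hta | hta
      · have h0 : 0 ≤ ∫ s in (0:ℝ)..t, g s := by
          refine intervalIntegral.integral_nonneg_of_ae_restrict ht ?_
          filter_upwards [MeasureTheory.ae_restrict_mem measurableSet_Icc,
            MeasureTheory.ae_restrict_of_ae hzero] with s hs hs0
          have hspos : 0 < s := lt_of_le_of_ne hs.1 (Ne.symm hs0)
          have hsc : s ≤ c := by
            have h' : s ≤ max 0 c := hs.2.trans hta
            rcases le_max_iff.mp h' with h'' | h''
            · linarith
            · exact h''
          exact hg_nonneg s hsc
        linarith
      · have ha0 : (0:ℝ) ≤ max 0 c := le_max_left 0 c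
        have h01 : (∫ s in (0:ℝ)..t, g s) =
            (∫ s in (0:ℝ)..(max 0 c), g s) + ∫ s in (max 0 c)..t, g s :=
          (intervalIntegral.integral_add_adjacent_intervals (hgint 0 (max 0 c))
            (hgint (max 0 c) t)).symm
        have h1 : 0 ≤ ∫ s in (0:ℝ)..(max 0 c), g s := by
          refine intervalIntegral.integral_nonneg_of_ae_restrict ha0 ?_
          filter_upwards [MeasureTheory.ae_restrict_mem measurableSet_Icc,
            MeasureTheory.ae_restrict_of_ae hzero] with s hs hs0
          have hspos : 0 < s := lt_of_le_of_ne hs.1 (Ne.symm hs0)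
          have hsc : s ≤ c := by
            rcases le_max_iff.mp hs.2 with h'' | h''
            · linarith
            · exact h''
          exact hg_nonneg s hsc
        have h2 : (∫ s in (max 0 c)..t, f s) ≤ ∫ s in (max 0 c)..t, g s := by
          apply intervalIntegral.integral_mono_on hta.le (hfint _ _) (hgint _ _)
          intro s hs
          exact hg_ge_f s ((le_max_right 0 c).trans hs.1)
        have h3 : (1/2) * Real.log K - (1/2) * Real.log R ≤ ∫ s in (max 0 c)..t, f s := by
          rw [hcalc (max 0 c) t, ← hRdef]
          have hXa : K ≤ (k:ℝ)^2 + (η - (k:ℝ)*(max 0 c))^2 + (l:ℝ)^2 := by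
            rw [hKdef]; nlinarith [sq_nonneg (η - (k:ℝ)*(max 0 c))]
          have := Real.log_le_log hKpos hXa
          linarith
        rw [h01]
        linarith
    have heq : Real.sqrt K / Real.sqrt R
        = Real.exp ((1/2) * Real.log K - (1/2) * Real.log R) := by
      rw [Real.exp_sub]
      congr 1
      · rw [Real.sqrt_eq_rpow, Real.rpow_def_of_pos hKpos, mul_comm]
      · rw [Real.sqrt_eq_rpow, Real.rpow_def_of_pos hRpos, mul_comm]
    rw [heq]
    exact Real.exp_le_exp.mpr hIlb
  have hA : |(l:ℝ)| / (K * Real.sqrt R) ≤ Real.sqrt K / Real.sqrt R := by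
    rw [div_le_div_iff₀ (by positivity) hsRpos]
    nlinarith [mul_le_mul_of_nonneg_right hlK hsRpos.le,
      mul_nonneg hsKpos.le hsRpos.le]
  have hB : |(k:ℝ)| * |η - (k:ℝ)*t| / (K * R) ≤ Real.sqrt K / Real.sqrt R := by
    rw [div_le_div_iff₀ (by positivity) hsRpos]
    nlinarith [mul_le_mul hkK hetaR (abs_nonneg _) hsKpos.le,
      mul_nonneg hsKpos.le hRpos.le, hsR,
      mul_le_mul_of_nonneg_right (mul_le_mul hkK hetaR (abs_nonneg _) hsKpos.le) hsRpos.le]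
  exact ⟨hA.trans hmain, hB.trans hmain⟩
end

section
/- Let ν ∈ (0,1], α > 0, let k ≠ 0 and l be integers, and let η ∈ ℝ. Set ρ_L(t) := √(k² + (η − kt)² + l²). Suppose Q, W : [0,∞) → ℂ are differentiable and solve Q′(t) = −ν ρ_L(t)² Q(t) − i α (l/ρ_L(t)) W(t) and W′(t) = −ν ρ_L(t)² W(t) − (k(η − kt)/ρ_L(t)²) W(t) − i α (l/ρ_L(t)) Q(t). Then for all t ≥ 0: |Q(t)| / (k² + (η − kt)² + l²) ≤ √2 · √(1 + η²) · (1 + t²)^{−1/2} · e^{−ν k² t³ / 24} · √(|Q(0)|² + |W(0)|²). -/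
private lemma norm_sq_complex (z : ℂ) : ‖z‖^2 = z.re^2 + z.im^2 := by
  rw [Complex.sq_norm, Complex.normSq_apply]; ring

/-- Derivative of the energy `‖Q‖² + ‖W‖²` for the coupled system. -/
private lemma energy_deriv (c1 c2 d : ℝ) (Q W : ℝ → ℂ) (t : ℝ)
    (hQ : HasDerivAt Q (-((c1 : ℝ) : ℂ) * Q t - Complex.I * ((c2 : ℝ) : ℂ) * W t) t)
    (hW : HasDerivAt W (-((c1 : ℝ) : ℂ) * W t - ((d : ℝ) : ℂ) * W t
            - Complex.I * ((c2 : ℝ) : ℂ) * Q t) t) :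
    HasDerivAt (fun τ => ‖Q τ‖^2 + ‖W τ‖^2)
      (-(2*c1)*(‖Q t‖^2 + ‖W t‖^2) - (2*d)*‖W t‖^2) t := by
  have hQre : HasDerivAt (fun τ => (Q τ).re)
      ((-((c1 : ℝ) : ℂ) * Q t - Complex.I * ((c2 : ℝ) : ℂ) * W t).re) t := by
    simpa [Function.comp_def] using Complex.reCLM.hasFDerivAt.comp_hasDerivAt t hQ
  have hQim : HasDerivAt (fun τ => (Q τ).im)
      ((-((c1 : ℝ) : ℂ) * Q t - Complex.I * ((c2 : ℝ) : ℂ) * W t).im) t := by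
    simpa [Function.comp_def] using Complex.imCLM.hasFDerivAt.comp_hasDerivAt t hQ
  have hWre : HasDerivAt (fun τ => (W τ).re)
      ((-((c1 : ℝ) : ℂ) * W t - ((d : ℝ) : ℂ) * W t - Complex.I * ((c2 : ℝ) : ℂ) * Q t).re) t := by
    simpa [Function.comp_def] using Complex.reCLM.hasFDerivAt.comp_hasDerivAt t hW
  have hWim : HasDerivAt (fun τ => (W τ).im)
      ((-((c1 : ℝ) : ℂ) * W t - ((d : ℝ) : ℂ) * W t - Complex.I * ((c2 : ℝ) : ℂ) * Q t).im) t := by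
    simpa [Function.comp_def] using Complex.imCLM.hasFDerivAt.comp_hasDerivAt t hW
  have h := ((hQre.pow 2).add (hQim.pow 2)).add ((hWre.pow 2).add (hWim.pow 2))
  have hfun : (fun τ => ‖Q τ‖^2 + ‖W τ‖^2)
      = (fun τ => ((Q τ).re^2 + (Q τ).im^2) + ((W τ).re^2 + (W τ).im^2)) := by
    funext τ; rw [norm_sq_complex, norm_sq_complex]
  rw [hfun]
  convert h using 1
  · rfl
  · rfl
  · rfl
  rw [norm_sq_complex, norm_sq_complex]
  simp only [Complex.sub_re, Complex.sub_im, Complex.neg_re, Complex.neg_im,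
    Complex.mul_re, Complex.mul_im, Complex.I_re, Complex.I_im,
    Complex.ofReal_re, Complex.ofReal_im]
  ring

/-- The key Grönwall-type estimate:
`E(T) e^{2ν K(T)} / ρ_L(T)² ≤ E(0) / (k² + l²)`. -/
private lemma gronwall_key (ν : ℝ) (k l : ℤ) (hk : k ≠ 0) (η : ℝ)
    (E G : ℝ → ℝ) (hG0 : ∀ τ, 0 ≤ G τ) (hGE : ∀ τ, G τ ≤ E τ)
    (hE : ∀ τ : ℝ, 0 ≤ τ → HasDerivAt E
      (-(2*(ν*((k:ℝ)^2+(η-(k:ℝ)*τ)^2+(l:ℝ)^2)))*E τ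
        - (2*((k:ℝ)*(η-(k:ℝ)*τ)/((k:ℝ)^2+(η-(k:ℝ)*τ)^2+(l:ℝ)^2)))*G τ) τ)
    (T : ℝ) (hT : 0 ≤ T) :
    E T * Real.exp (2*ν*((((k:ℝ)^2+(l:ℝ)^2+η^2))*T - (k:ℝ)*η*T^2 + (k:ℝ)^2*T^3/3))
      / ((k:ℝ)^2+(η-(k:ℝ)*T)^2+(l:ℝ)^2)
      ≤ E 0 / ((k:ℝ)^2+(l:ℝ)^2) := by
  have hk0 : ((k:ℝ)) ≠ 0 := Int.cast_ne_zero.2 hk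
  have hk2 : (1:ℝ) ≤ (k:ℝ)^2 := by
    have h1 : (1:ℤ) ≤ |k| := Int.one_le_abs hk
    have : (1:ℝ) ≤ |(k:ℝ)| := by exact_mod_cast h1
    nlinarith [sq_abs ((k:ℝ))]
  have hmpos : (0:ℝ) < (k:ℝ)^2+(l:ℝ)^2 := by nlinarith [sq_nonneg ((l:ℝ))]
  have hspos : ∀ τ : ℝ, (0:ℝ) < (k:ℝ)^2+(η-(k:ℝ)*τ)^2+(l:ℝ)^2 := by
    intro τ; nlinarith [sq_nonneg (η-(k:ℝ)*τ), sq_nonneg ((l:ℝ))]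
  have hsge : ∀ τ : ℝ, (k:ℝ)^2+(l:ℝ)^2 ≤ (k:ℝ)^2+(η-(k:ℝ)*τ)^2+(l:ℝ)^2 := by
    intro τ; nlinarith [sq_nonneg (η-(k:ℝ)*τ)]
  have hE0 : ∀ τ, 0 ≤ E τ := fun τ => le_trans (hG0 τ) (hGE τ)
  -- derivative of K
  have hK : ∀ x : ℝ, HasDerivAt
      (fun y => (((k:ℝ)^2+(l:ℝ)^2+η^2))*y - (k:ℝ)*η*y^2 + (k:ℝ)^2*y^3/3)
      ((k:ℝ)^2+(η-(k:ℝ)*x)^2+(l:ℝ)^2) x := by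
    intro x
    have h := (((hasDerivAt_id' (𝕜 := ℝ) x).const_mul (((k:ℝ)^2+(l:ℝ)^2+η^2))).sub
        ((hasDerivAt_pow 2 x).const_mul ((k:ℝ)*η))).add
        (((hasDerivAt_pow 3 x).const_mul ((k:ℝ)^2)).div_const 3)
    convert h using 1
    · rfl
    · rfl
    · rfl
    push_cast
    ring
  -- derivative of s
  have hs : ∀ x : ℝ, HasDerivAt
      (fun y => (k:ℝ)^2+(η-(k:ℝ)*y)^2+(l:ℝ)^2) (-(2*((k:ℝ)*(η-(k:ℝ)*x)))) x := by
    intro x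
    have hin : HasDerivAt (fun y : ℝ => η - (k:ℝ)*y) (0 - (k:ℝ)*1) x :=
      (hasDerivAt_const x η).sub ((hasDerivAt_id' (𝕜 := ℝ) x).const_mul ((k:ℝ)))
    have h := ((hasDerivAt_const x ((k:ℝ)^2)).add (hin.pow 2)).add (hasDerivAt_const x ((l:ℝ)^2))
    convert h using 1
    · rfl
    · rfl
    · rfl
    push_cast
    ring
  -- derivative of h₂ = E * exp(2νK)
  have hh2 : ∀ x : ℝ, 0 ≤ x → HasDerivAt
      (fun y => E y * Real.exp (2*ν*((((k:ℝ)^2+(l:ℝ)^2+η^2))*y - (k:ℝ)*η*y^2 + (k:ℝ)^2*y^3/3)))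
      (Real.exp (2*ν*((((k:ℝ)^2+(l:ℝ)^2+η^2))*x - (k:ℝ)*η*x^2 + (k:ℝ)^2*x^3/3))
        * (-(2*((k:ℝ)*(η-(k:ℝ)*x)/((k:ℝ)^2+(η-(k:ℝ)*x)^2+(l:ℝ)^2)))*G x)) x := by
    intro x hx
    have h := (hE x hx).mul (((hK x).const_mul (2*ν)).exp)
    convert h using 1
    · rfl
    · rfl
    · rfl
    have hsne : ((k:ℝ)^2+(η-(k:ℝ)*x)^2+(l:ℝ)^2) ≠ 0 := (hspos x).ne'
    field_simp
    ring
  -- derivative of h₁ = E * exp(2νK) / s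
  have hh1 : ∀ x : ℝ, 0 ≤ x → HasDerivAt
      (fun y => E y * Real.exp (2*ν*((((k:ℝ)^2+(l:ℝ)^2+η^2))*y - (k:ℝ)*η*y^2 + (k:ℝ)^2*y^3/3))
          / ((k:ℝ)^2+(η-(k:ℝ)*y)^2+(l:ℝ)^2))
      (Real.exp (2*ν*((((k:ℝ)^2+(l:ℝ)^2+η^2))*x - (k:ℝ)*η*x^2 + (k:ℝ)^2*x^3/3))
        * (2*((k:ℝ)*(η-(k:ℝ)*x))*(E x - G x)) / ((k:ℝ)^2+(η-(k:ℝ)*x)^2+(l:ℝ)^2)^2) x := by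
    intro x hx
    have h := (hh2 x hx).div (hs x) (hspos x).ne'
    convert h using 1
    · rfl
    · rfl
    · rfl
    have hsne : ((k:ℝ)^2+(η-(k:ℝ)*x)^2+(l:ℝ)^2) ≠ 0 := (hspos x).ne'
    field_simp
    ring
  set t₀ : ℝ := max 0 (min T (η/(k:ℝ))) with ht₀def
  have ht₀0 : 0 ≤ t₀ := le_max_left _ _
  have ht₀T : t₀ ≤ T := max_le hT (min_le_left _ _)
  -- antitonicity of h₂ on [0, t₀]
  have hA2 : AntitoneOn
      (fun y => E y * Real.exp (2*ν*((((k:ℝ)^2+(l:ℝ)^2+η^2))*y - (k:ℝ)*η*y^2 + (k:ℝ)^2*y^3/3)))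
      (Set.Icc 0 t₀) := by
    apply antitoneOn_of_deriv_nonpos (convex_Icc 0 t₀)
    · intro x hx
      exact ((hh2 x hx.1).continuousAt).continuousWithinAt
    · rw [interior_Icc]
      intro x hx
      exact ((hh2 x hx.1.le).differentiableAt).differentiableWithinAt
    · rw [interior_Icc]
      intro x hx
      rw [(hh2 x hx.1.le).deriv]
      have hxηk : x ≤ η/(k:ℝ) := by
        rcases le_or_gt (min T (η/(k:ℝ))) 0 with h | h
        · exfalso
          have : t₀ = 0 := max_eq_left h
          rw [this] at hx
          exact absurd hx.2 (not_lt.2 hx.1.le)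
        · have : t₀ = min T (η/(k:ℝ)) := max_eq_right h.le
          have := hx.2
          rw [‹t₀ = min T (η/(k:ℝ))›] at this
          exact le_of_lt (lt_of_lt_of_le this (min_le_right _ _))
      have hkx : 0 ≤ (k:ℝ)*(η-(k:ℝ)*x) := by
        have h1 : x * (k:ℝ)^2 ≤ (η/(k:ℝ)) * (k:ℝ)^2 :=
          mul_le_mul_of_nonneg_right hxηk (sq_nonneg _)
        have h2 : (η/(k:ℝ))*(k:ℝ)^2 = η*(k:ℝ) := by field_simp
        nlinarith
      have hnp : -(2*((k:ℝ)*(η-(k:ℝ)*x)/((k:ℝ)^2+(η-(k:ℝ)*x)^2+(l:ℝ)^2)))*G x ≤ 0 := by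
        apply mul_nonpos_of_nonpos_of_nonneg _ (hG0 x)
        have : 0 ≤ (k:ℝ)*(η-(k:ℝ)*x)/((k:ℝ)^2+(η-(k:ℝ)*x)^2+(l:ℝ)^2) :=
          div_nonneg hkx (hspos x).le
        linarith
      exact mul_nonpos_of_nonneg_of_nonpos (Real.exp_pos _).le hnp
  -- antitonicity of h₁ on [t₀, T]
  have hA1 : AntitoneOn
      (fun y => E y * Real.exp (2*ν*((((k:ℝ)^2+(l:ℝ)^2+η^2))*y - (k:ℝ)*η*y^2 + (k:ℝ)^2*y^3/3))
          / ((k:ℝ)^2+(η-(k:ℝ)*y)^2+(l:ℝ)^2))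
      (Set.Icc t₀ T) := by
    apply antitoneOn_of_deriv_nonpos (convex_Icc t₀ T)
    · intro x hx
      exact ((hh1 x (le_trans ht₀0 hx.1)).continuousAt).continuousWithinAt
    · rw [interior_Icc]
      intro x hx
      exact ((hh1 x (le_trans ht₀0 hx.1.le)).differentiableAt).differentiableWithinAt
    · rw [interior_Icc]
      intro x hx
      rw [(hh1 x (le_trans ht₀0 hx.1.le)).deriv]
      have hxηk : η/(k:ℝ) ≤ x := by
        rcases le_or_gt (η/(k:ℝ)) T with h | h
        · have : min T (η/(k:ℝ)) = η/(k:ℝ) := min_eq_right h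
          have h2 : η/(k:ℝ) ≤ t₀ := by
            rw [ht₀def, this]; exact le_max_right _ _
          linarith [hx.1]
        · exfalso
          have : min T (η/(k:ℝ)) = T := min_eq_left h.le
          have h2 : T ≤ t₀ := by
            rw [ht₀def, this]; exact le_max_right _ _
          linarith [hx.1, hx.2]
      have hkx : (k:ℝ)*(η-(k:ℝ)*x) ≤ 0 := by
        have h1 : (η/(k:ℝ)) * (k:ℝ)^2 ≤ x * (k:ℝ)^2 :=
          mul_le_mul_of_nonneg_right hxηk (sq_nonneg _)
        have h2 : (η/(k:ℝ))*(k:ℝ)^2 = η*(k:ℝ) := by field_simp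
        nlinarith
      apply div_nonpos_of_nonpos_of_nonneg _ (sq_nonneg _)
      apply mul_nonpos_of_nonneg_of_nonpos (Real.exp_pos _).le
      have hEG : 0 ≤ E x - G x := sub_nonneg.2 (hGE x)
      nlinarith
  -- chain the estimates
  have h0mem : (0:ℝ) ∈ Set.Icc (0:ℝ) t₀ := ⟨le_refl 0, ht₀0⟩
  have ht₀mem : t₀ ∈ Set.Icc (0:ℝ) t₀ := ⟨ht₀0, le_refl t₀⟩
  have ht₀mem' : t₀ ∈ Set.Icc t₀ T := ⟨le_refl t₀, ht₀T⟩
  have hTmem : T ∈ Set.Icc t₀ T := ⟨ht₀T, le_refl T⟩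
  have c1 := hA1 ht₀mem' hTmem ht₀T
  have c3 := hA2 h0mem ht₀mem ht₀0
  simp only at c1 c3
  have hexp0 : Real.exp (2*ν*((((k:ℝ)^2+(l:ℝ)^2+η^2))*(0:ℝ) - (k:ℝ)*η*(0:ℝ)^2
      + (k:ℝ)^2*(0:ℝ)^3/3)) = 1 := by norm_num
  rw [hexp0, mul_one] at c3
  have hh2nonneg : 0 ≤ E t₀ * Real.exp (2*ν*((((k:ℝ)^2+(l:ℝ)^2+η^2))*t₀ - (k:ℝ)*η*t₀^2
      + (k:ℝ)^2*t₀^3/3)) := mul_nonneg (hE0 t₀) (Real.exp_pos _).le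
  have c2 : E t₀ * Real.exp (2*ν*((((k:ℝ)^2+(l:ℝ)^2+η^2))*t₀ - (k:ℝ)*η*t₀^2
        + (k:ℝ)^2*t₀^3/3)) / ((k:ℝ)^2+(η-(k:ℝ)*t₀)^2+(l:ℝ)^2)
      ≤ E t₀ * Real.exp (2*ν*((((k:ℝ)^2+(l:ℝ)^2+η^2))*t₀ - (k:ℝ)*η*t₀^2
        + (k:ℝ)^2*t₀^3/3)) / ((k:ℝ)^2+(l:ℝ)^2) := by
    apply div_le_div_of_nonneg_left hh2nonneg hmpos (hsge t₀)
  have c4 : E t₀ * Real.exp (2*ν*((((k:ℝ)^2+(l:ℝ)^2+η^2))*t₀ - (k:ℝ)*η*t₀^2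
        + (k:ℝ)^2*t₀^3/3)) / ((k:ℝ)^2+(l:ℝ)^2) ≤ E 0 / ((k:ℝ)^2+(l:ℝ)^2) :=
    (div_le_div_iff_of_pos_right hmpos).2 c3
  calc E T * Real.exp (2*ν*((((k:ℝ)^2+(l:ℝ)^2+η^2))*T - (k:ℝ)*η*T^2 + (k:ℝ)^2*T^3/3))
      / ((k:ℝ)^2+(η-(k:ℝ)*T)^2+(l:ℝ)^2)
      ≤ E t₀ * Real.exp (2*ν*((((k:ℝ)^2+(l:ℝ)^2+η^2))*t₀ - (k:ℝ)*η*t₀^2 + (k:ℝ)^2*t₀^3/3))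
        / ((k:ℝ)^2+(η-(k:ℝ)*t₀)^2+(l:ℝ)^2) := c1
    _ ≤ E t₀ * Real.exp (2*ν*((((k:ℝ)^2+(l:ℝ)^2+η^2))*t₀ - (k:ℝ)*η*t₀^2 + (k:ℝ)^2*t₀^3/3))
        / ((k:ℝ)^2+(l:ℝ)^2) := c2
    _ ≤ E 0 / ((k:ℝ)^2+(l:ℝ)^2) := c4

set_option maxHeartbeats 1000000 in
/-- Combined inviscid damping and enhanced dissipation for the second
velocity component at a single nonzero Fourier mode:
`|Q(t)|/ρ_L(t)² ≤ √2 √(1+η²) (1+t²)^{-1/2} e^{-νk²t³/24} √(|Q(0)|²+|W(0)|²)`. -/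
theorem inviscid_damping_enhanced_dissipation_u2
    (ν α : ℝ) (hν : 0 < ν) (hν1 : ν ≤ 1) (hα : 0 < α)
    (k l : ℤ) (hk : k ≠ 0) (η : ℝ)
    (Q W : ℝ → ℂ)
    (hQ : ∀ t : ℝ, 0 ≤ t →
      HasDerivAt Q
        (-((ν * (rhoL k l η t)^2 : ℝ) : ℂ) * Q t
          - Complex.I * ((α * (l:ℝ) / rhoL k l η t : ℝ) : ℂ) * W t) t)
    (hW : ∀ t : ℝ, 0 ≤ t →
      HasDerivAt W
        (-((ν * (rhoL k l η t)^2 : ℝ) : ℂ) * W t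
          - (((k:ℝ) * (η - (k:ℝ)*t) / (rhoL k l η t)^2 : ℝ) : ℂ) * W t
          - Complex.I * ((α * (l:ℝ) / rhoL k l η t : ℝ) : ℂ) * Q t) t) :
    ∀ t : ℝ, 0 ≤ t →
      ‖Q t‖ / ((k:ℝ)^2 + (η - (k:ℝ)*t)^2 + (l:ℝ)^2)
        ≤ Real.sqrt 2 * Real.sqrt (1 + η^2) * (1 + t^2) ^ ((-1 : ℝ)/2) *
            Real.exp (-(ν * (k:ℝ)^2 * t^3) / 24) *
            Real.sqrt (‖Q 0‖^2 + ‖W 0‖^2) := by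
  intro T hT
  have hk0 : ((k:ℝ)) ≠ 0 := Int.cast_ne_zero.2 hk
  have hk2 : (1:ℝ) ≤ (k:ℝ)^2 := by
    have h1 : (1:ℤ) ≤ |k| := Int.one_le_abs hk
    have : (1:ℝ) ≤ |(k:ℝ)| := by exact_mod_cast h1
    nlinarith [sq_abs ((k:ℝ))]
  have hmpos : (0:ℝ) < (k:ℝ)^2+(l:ℝ)^2 := by nlinarith [sq_nonneg ((l:ℝ))]
  have hspos : ∀ τ : ℝ, (0:ℝ) < (k:ℝ)^2+(η-(k:ℝ)*τ)^2+(l:ℝ)^2 := by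
    intro τ; nlinarith [sq_nonneg (η-(k:ℝ)*τ), sq_nonneg ((l:ℝ))]
  have hρ2 : ∀ τ : ℝ, (rhoL k l η τ)^2 = (k:ℝ)^2+(η-(k:ℝ)*τ)^2+(l:ℝ)^2 := by
    intro τ; rw [rhoL]; exact Real.sq_sqrt (hspos τ).le
  -- the energy derivative in the form needed for the Grönwall lemma
  have hE : ∀ τ : ℝ, 0 ≤ τ → HasDerivAt (fun y => ‖Q y‖^2 + ‖W y‖^2)
      (-(2*(ν*((k:ℝ)^2+(η-(k:ℝ)*τ)^2+(l:ℝ)^2)))*(‖Q τ‖^2 + ‖W τ‖^2)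
        - (2*((k:ℝ)*(η-(k:ℝ)*τ)/((k:ℝ)^2+(η-(k:ℝ)*τ)^2+(l:ℝ)^2)))*‖W τ‖^2) τ := by
    intro τ hτ
    have h := energy_deriv (ν * (rhoL k l η τ)^2) (α * (l:ℝ) / rhoL k l η τ)
      ((k:ℝ) * (η - (k:ℝ)*τ) / (rhoL k l η τ)^2) Q W τ (hQ τ hτ) (hW τ hτ)
    rw [hρ2 τ] at h
    exact h
  have key := gronwall_key ν k l hk η (fun y => ‖Q y‖^2 + ‖W y‖^2) (fun y => ‖W y‖^2)
    (fun τ => sq_nonneg _) (fun τ => by simp [sq_nonneg]) hE T hT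
  -- notation
  set S : ℝ := (k:ℝ)^2+(η-(k:ℝ)*T)^2+(l:ℝ)^2 with hSdef
  set m : ℝ := (k:ℝ)^2+(l:ℝ)^2 with hmdef
  set KT : ℝ := (((k:ℝ)^2+(l:ℝ)^2+η^2))*T - (k:ℝ)*η*T^2 + (k:ℝ)^2*T^3/3 with hKdef
  set E0 : ℝ := ‖Q 0‖^2 + ‖W 0‖^2 with hE0def
  set A : ℝ := Real.exp (-(ν * (k:ℝ)^2 * T^3) / 24) with hAdef
  have hS : 0 < S := hspos T
  have hE0nn : 0 ≤ E0 := by positivity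
  have h1T : (0:ℝ) < 1 + T^2 := by positivity
  -- K lower bound
  have hKlow : (k:ℝ)^2*T^3/24 ≤ KT := by
    rw [hKdef]
    nlinarith [mul_nonneg hT (sq_nonneg (η - (k:ℝ)*T/2)), mul_nonneg hT (sq_nonneg ((l:ℝ))),
      mul_nonneg hT hT, mul_nonneg (mul_nonneg hT hT) hT, sq_nonneg ((k:ℝ)),
      mul_nonneg (mul_nonneg (mul_nonneg hT hT) hT) (sq_nonneg ((k:ℝ))),
      mul_nonneg hT (sq_nonneg ((k:ℝ)))]
  -- exponential comparison
  have hexpA : Real.exp (-(2*ν*KT)) ≤ A^2 := by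
    have hA2eq : A^2 = Real.exp (-(ν * (k:ℝ)^2 * T^3) / 12) := by
      rw [hAdef, sq, ← Real.exp_add]; ring_nf
    rw [hA2eq]
    apply Real.exp_le_exp.2
    nlinarith [mul_nonneg hν.le (sub_nonneg.2 hKlow)]
  -- from key: E T ≤ E0 * S * exp(-2νKT) / m
  have hXpos : (0:ℝ) < Real.exp (2*ν*KT) := Real.exp_pos _
  have hEt : ‖Q T‖^2 + ‖W T‖^2 ≤ E0 * S * Real.exp (-(2*ν*KT)) / m := by
    rw [div_le_div_iff₀ hS hmpos] at key
    rw [le_div_iff₀ hmpos, Real.exp_neg, ← div_eq_mul_inv, le_div_iff₀ hXpos]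
    linarith [key]
  -- geometric inequality: 1 + T² ≤ 2(1+η²) m S
  have h1t : 1 + T^2 ≤ 2*(1+η^2)*(m*S) := by
    have e1 : T^2 ≤ 2*η^2 + 2*(η-(k:ℝ)*T)^2 := by
      nlinarith [sq_nonneg ((k:ℝ)*T - 2*η), mul_nonneg (sub_nonneg.2 hk2) (sq_nonneg T)]
    have e2 : 1 + T^2 ≤ 2*(1+η^2)*((k:ℝ)^2+(η-(k:ℝ)*T)^2) := by
      nlinarith [mul_nonneg (sub_nonneg.2 hk2) (sq_nonneg η),
        mul_nonneg (sq_nonneg η) (sq_nonneg (η-(k:ℝ)*T))]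
    have hm1 : (1:ℝ) ≤ m := by rw [hmdef]; nlinarith [sq_nonneg ((l:ℝ))]
    have e3 : (k:ℝ)^2+(η-(k:ℝ)*T)^2 ≤ m*S := by
      have hmS : S ≤ m*S := by nlinarith [mul_nonneg (sub_nonneg.2 hm1) hS.le]
      have hSb : (k:ℝ)^2+(η-(k:ℝ)*T)^2 ≤ S := by rw [hSdef]; nlinarith [sq_nonneg ((l:ℝ))]
      linarith
    calc 1 + T^2 ≤ 2*(1+η^2)*((k:ℝ)^2+(η-(k:ℝ)*T)^2) := e2
      _ ≤ 2*(1+η^2)*(m*S) := by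
          apply mul_le_mul_of_nonneg_left e3 (by positivity)
  -- rewrite the rpow
  have hrw : (1+T^2) ^ ((-1 : ℝ)/2) = (Real.sqrt (1+T^2))⁻¹ := by
    rw [show ((-1:ℝ)/2) = -(1/2) by norm_num, Real.rpow_neg h1T.le, Real.sqrt_eq_rpow]
  -- final computation
  have hRHS : (0:ℝ) ≤ Real.sqrt 2 * Real.sqrt (1 + η^2) * (1 + T^2) ^ ((-1 : ℝ)/2) * A
      * Real.sqrt E0 := by positivity
  rw [div_le_iff₀ hS]
  have expand : (Real.sqrt 2 * Real.sqrt (1 + η^2) * (1 + T^2) ^ ((-1 : ℝ)/2) * A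
      * Real.sqrt E0 * S)^2 = 2*(1+η^2)*A^2*E0*S^2/(1+T^2) := by
    rw [hrw, mul_pow, mul_pow, mul_pow, mul_pow, mul_pow, inv_pow,
      Real.sq_sqrt (by norm_num : (0:ℝ) ≤ 2), Real.sq_sqrt (by positivity : (0:ℝ) ≤ 1+η^2),
      Real.sq_sqrt hE0nn, Real.sq_sqrt h1T.le]
    ring
  have hchain : ‖Q T‖^2 ≤ (Real.sqrt 2 * Real.sqrt (1 + η^2) * (1 + T^2) ^ ((-1 : ℝ)/2) * A
      * Real.sqrt E0 * S)^2 := by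
    rw [expand]
    calc ‖Q T‖^2 ≤ ‖Q T‖^2 + ‖W T‖^2 := le_add_of_nonneg_right (sq_nonneg _)
      _ ≤ E0 * S * Real.exp (-(2*ν*KT)) / m := hEt
      _ ≤ E0 * S * A^2 / m := by
          apply (div_le_div_iff_of_pos_right hmpos).2
          exact mul_le_mul_of_nonneg_left hexpA (by positivity)
      _ ≤ 2*(1+η^2)*A^2*E0*S^2/(1+T^2) := by
          rw [div_le_div_iff₀ hmpos h1T]
          nlinarith [mul_le_mul_of_nonneg_left h1t
            (show (0:ℝ) ≤ E0*S*A^2 by positivity)]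
  calc ‖Q T‖ = Real.sqrt (‖Q T‖^2) := (Real.sqrt_sq (norm_nonneg _)).symm
    _ ≤ Real.sqrt ((Real.sqrt 2 * Real.sqrt (1 + η^2) * (1 + T^2) ^ ((-1 : ℝ)/2) * A
        * Real.sqrt E0 * S)^2) := Real.sqrt_le_sqrt hchain
    _ = Real.sqrt 2 * Real.sqrt (1 + η^2) * (1 + T^2) ^ ((-1 : ℝ)/2) * A
        * Real.sqrt E0 * S := Real.sqrt_sq (mul_nonneg hRHS hS.le)
end

section
/- Let β ∈ ℝ with β < 0 or β > 1, set α := √(β(β−1)), let ν ∈ (0,1], let k ≠ 0 and l be integers, and let η ∈ ℝ. Set ρ_L(t) := √(k² + (η − kt)² + l²). Suppose Q, W : [0,∞) → ℂ are differentiable and solve Q′(t) = −ν ρ_L(t)² Q(t) − i α (l/ρ_L(t)) W(t) and W′(t) = −ν ρ_L(t)² W(t) − (k(η − kt)/ρ_L(t)²) W(t) − i α (l/ρ_L(t)) Q(t). Then for all t ≥ 0: √((β−1)/β) · (|l| / ((k² + l²) ρ_L(t))) · |W(t)| + (|k| |η − kt| / ((k² + l²) ρ_L(t)²)) · |Q(t)|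 ≤ (√((β−1)/β) + 1) · e^{−ν k² t³ / 24} · √(|Q(0)|² + |W(0)|²). -/
noncomputable def mf (k l : ℤ) (η s : ℝ) : ℝ :=
  (k:ℝ)^2 + (η - (k:ℝ)*s)^2 + (l:ℝ)^2

noncomputable def Mf (k l : ℤ) (η s : ℝ) : ℝ :=
  ((k:ℝ)^2 + (l:ℝ)^2 + η^2)*s - η*(k:ℝ)*s^2 + (k:ℝ)^2/3*s^3

noncomputable def EE (Q W : ℝ → ℂ) (s : ℝ) : ℝ :=
  Complex.normSq (Q s) + Complex.normSq (W s)

lemma aux_deriv {f g : ℝ → ℂ} {r c : ℝ} {s : ℝ}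
    (hf : HasDerivAt f (-(r:ℂ) * f s - Complex.I * (c:ℂ) * g s) s) :
    HasDerivAt (fun τ => Complex.normSq (f τ))
      (-(2*r)*Complex.normSq (f s)
        + 2*c*((f s).re*(g s).im - (f s).im*(g s).re)) s := by
  have hre : HasDerivAt (fun τ => (f τ).re)
      ((-(r:ℂ) * f s - Complex.I * (c:ℂ) * g s).re) s := by
    simpa only [Function.comp_def, Complex.reCLM_apply] using
      Complex.reCLM.hasFDerivAt.comp_hasDerivAt s hf
  have him : HasDerivAt (fun τ => (f τ).im)
      ((-(r:ℂ) * f s - Complex.I * (c:ℂ) * g s).im) s := by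
    simpa only [Function.comp_def, Complex.imCLM_apply] using
      Complex.imCLM.hasFDerivAt.comp_hasDerivAt s hf
  have h := (hre.mul hre).add (him.mul him)
  refine h.congr_deriv ?_
  simp only [Complex.normSq_apply, Complex.sub_re, Complex.sub_im, Complex.neg_re,
      Complex.neg_im, Complex.mul_re, Complex.mul_im, Complex.ofReal_re, Complex.ofReal_im,
      Complex.I_re, Complex.I_im]
  ring

section pieces

variable (β ν : ℝ) (k l : ℤ) (η : ℝ) (Q W : ℝ → ℂ)

lemma mf_pos (hk : k ≠ 0) : ∀ s, 0 < mf k l η s := by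
  intro s
  have h1 : (1:ℤ) ≤ k^2 := by rcases hk.lt_or_gt with h|h <;> nlinarith
  have h1' : (1:ℝ) ≤ (k:ℝ)^2 := by exact_mod_cast h1
  unfold mf; nlinarith [sq_nonneg (η - (k:ℝ)*s), sq_nonneg ((l:ℝ))]

lemma rho_sq (hk : k ≠ 0) : ∀ s, (rhoL k l η s)^2 = mf k l η s := fun s =>
  Real.sq_sqrt (mf_pos k l η hk s).le

lemma rho_pos (hk : k ≠ 0) : ∀ s, 0 < rhoL k l η s := fun s =>
  Real.sqrt_pos.2 (mf_pos k l η hk s)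

lemma hM_deriv : ∀ s, HasDerivAt (fun τ => Mf k l η τ) (mf k l η s) s := by
  intro s
  have h1 : HasDerivAt (fun τ : ℝ => ((k:ℝ)^2+(l:ℝ)^2+η^2)*τ) (((k:ℝ)^2+(l:ℝ)^2+η^2)) s := by
    simpa using (hasDerivAt_id s).const_mul ((k:ℝ)^2+(l:ℝ)^2+η^2)
  have h2 : HasDerivAt (fun τ : ℝ => η*(k:ℝ)*τ^2) (η*(k:ℝ)*(2*s)) s := by
    have := (hasDerivAt_pow 2 s).const_mul (η*(k:ℝ))
    exact this.congr_deriv (by push_cast; ring)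
  have h3 : HasDerivAt (fun τ : ℝ => (k:ℝ)^2/3*τ^3) ((k:ℝ)^2/3*(3*s^2)) s := by
    have := (hasDerivAt_pow 3 s).const_mul ((k:ℝ)^2/3)
    exact this.congr_deriv (by push_cast; ring)
  have h := (h1.sub h2).add h3
  refine h.congr_deriv ?_
  unfold mf; ring

lemma hm_deriv : ∀ s, HasDerivAt (fun τ => mf k l η τ) (-2*(k:ℝ)*(η - (k:ℝ)*s)) s := by
  intro s
  have h0 : HasDerivAt (fun τ : ℝ => η - (k:ℝ)*τ) (-(k:ℝ)) s := by
    simpa using ((hasDerivAt_id s).const_mul ((k:ℝ))).const_sub η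
  have h := ((h0.pow 2).const_add ((k:ℝ)^2)).add_const ((l:ℝ)^2)
  refine h.congr_deriv ?_
  push_cast; ring

end pieces
section energy

variable {β ν : ℝ} {k l : ℤ} {η : ℝ} {Q W : ℝ → ℂ}

lemma hE_deriv (hk : k ≠ 0)
    (hQ : ∀ t : ℝ, 0 ≤ t →
      HasDerivAt Q
        (-((ν * (rhoL k l η t)^2 : ℝ) : ℂ) * Q t
          - Complex.I *
            ((Real.sqrt (β * (β - 1)) * (l:ℝ) / rhoL k l η t : ℝ) : ℂ) * W t) t)
    (hW : ∀ t : ℝ, 0 ≤ t →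
      HasDerivAt W
        (-((ν * (rhoL k l η t)^2 : ℝ) : ℂ) * W t
          - (((k:ℝ) * (η - (k:ℝ)*t) / (rhoL k l η t)^2 : ℝ) : ℂ) * W t
          - Complex.I *
            ((Real.sqrt (β * (β - 1)) * (l:ℝ) / rhoL k l η t : ℝ) : ℂ) * Q t) t) :
    ∀ s, 0 ≤ s → HasDerivAt (fun τ => EE Q W τ)
      (-2*(ν*mf k l η s)*(EE Q W s)
        - 2*((k:ℝ)*(η - (k:ℝ)*s)/mf k l η s)*Complex.normSq (W s)) s := by
  intro s hs
  have hQ' := hQ s hs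
  rw [rho_sq k l η hk s] at hQ'
  have hW' := hW s hs
  rw [rho_sq k l η hk s] at hW'
  have hQc : HasDerivAt Q
      (-((ν * mf k l η s : ℝ) : ℂ) * Q s
        - Complex.I * ((Real.sqrt (β * (β - 1)) * (l:ℝ) / rhoL k l η s : ℝ) : ℂ) * W s) s := hQ'
  have hWc : HasDerivAt W
      (-((ν * mf k l η s + (k:ℝ) * (η - (k:ℝ)*s) / mf k l η s : ℝ) : ℂ) * W s
        - Complex.I * ((Real.sqrt (β * (β - 1)) * (l:ℝ) / rhoL k l η s : ℝ) : ℂ) * Q s) s := by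
    convert hW' using 1
    push_cast
    ring
  have hQd := aux_deriv (g := W) hQc
  have hWd := aux_deriv (g := Q) hWc
  have h := hQd.add hWd
  have hfun : (fun τ => EE Q W τ) =
      (fun τ => Complex.normSq (Q τ) + Complex.normSq (W τ)) := by
    funext τ; rfl
  rw [hfun]
  refine h.congr_deriv ?_
  unfold EE
  ring

end energy
section GH

variable {β ν : ℝ} {k l : ℤ} {η : ℝ} {Q W : ℝ → ℂ}

lemma hG_deriv (hk : k ≠ 0)
    (hE : ∀ s, 0 ≤ s → HasDerivAt (fun τ => EE Q W τ)
      (-2*(ν*mf k l η s)*(EE Q W s)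
        - 2*((k:ℝ)*(η - (k:ℝ)*s)/mf k l η s)*Complex.normSq (W s)) s) :
    ∀ s, 0 ≤ s → HasDerivAt (fun τ => EE Q W τ * Real.exp (2*ν*Mf k l η τ))
      (-2*((k:ℝ)*(η - (k:ℝ)*s)/mf k l η s)*(Complex.normSq (W s)
          *Real.exp (2*ν*Mf k l η s))) s := by
  intro s hs
  have hexp : HasDerivAt (fun τ => Real.exp (2*ν*Mf k l η τ))
      (Real.exp (2*ν*Mf k l η s) * (2*ν*mf k l η s)) s := by
    have := ((hM_deriv k l η s).const_mul (2*ν)).exp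
    convert this using 1 <;> ring_nf
  have h := (hE s hs).mul hexp
  refine h.congr_deriv ?_
  ring

lemma hH_deriv (hk : k ≠ 0)
    (hE : ∀ s, 0 ≤ s → HasDerivAt (fun τ => EE Q W τ)
      (-2*(ν*mf k l η s)*(EE Q W s)
        - 2*((k:ℝ)*(η - (k:ℝ)*s)/mf k l η s)*Complex.normSq (W s)) s) :
    ∀ s, 0 ≤ s → HasDerivAt (fun τ => EE Q W τ / mf k l η τ * Real.exp (2*ν*Mf k l η τ))
      (2*((k:ℝ)*(η - (k:ℝ)*s))*(Complex.normSq (Q s)/(mf k l η s)^2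
          *Real.exp (2*ν*Mf k l η s))) s := by
  intro s hs
  have hm0 : mf k l η s ≠ 0 := (mf_pos k l η hk s).ne'
  have hexp : HasDerivAt (fun τ => Real.exp (2*ν*Mf k l η τ))
      (Real.exp (2*ν*Mf k l η s) * (2*ν*mf k l η s)) s := by
    have := ((hM_deriv k l η s).const_mul (2*ν)).exp
    convert this using 1 <;> ring_nf
  have h := ((hE s hs).div (hm_deriv k l η s) hm0).mul hexp
  refine h.congr_deriv ?_
  rw [Pi.div_apply]
  unfold EE
  field_simp
  ring

end GH

set_option maxHeartbeats 1600000 in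
/-- Enhanced dissipation bound for the reconstructed first velocity
component at a single nonzero Fourier mode in the stable regime
`β < 0` or `β > 1`, `α = √(β(β-1))`. -/
theorem enhanced_dissipation_u1
    (β : ℝ) (hβ : β < 0 ∨ 1 < β)
    (ν : ℝ) (hν : 0 < ν) (hν1 : ν ≤ 1)
    (k l : ℤ) (hk : k ≠ 0) (η : ℝ)
    (Q W : ℝ → ℂ)
    (hQ : ∀ t : ℝ, 0 ≤ t →
      HasDerivAt Q
        (-((ν * (rhoL k l η t)^2 : ℝ) : ℂ) * Q t
          - Complex.I *
            ((Real.sqrt (β * (β - 1)) * (l:ℝ) / rhoL k l η t : ℝ) : ℂ) * W t) t)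
    (hW : ∀ t : ℝ, 0 ≤ t →
      HasDerivAt W
        (-((ν * (rhoL k l η t)^2 : ℝ) : ℂ) * W t
          - (((k:ℝ) * (η - (k:ℝ)*t) / (rhoL k l η t)^2 : ℝ) : ℂ) * W t
          - Complex.I *
            ((Real.sqrt (β * (β - 1)) * (l:ℝ) / rhoL k l η t : ℝ) : ℂ) * Q t) t) :
    ∀ t : ℝ, 0 ≤ t →
      Real.sqrt ((β - 1)/β) *
          (|(l:ℝ)| / (((k:ℝ)^2 + (l:ℝ)^2) * rhoL k l η t)) * ‖W t‖
        + (|(k:ℝ)| * |η - (k:ℝ)*t| /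
            (((k:ℝ)^2 + (l:ℝ)^2) * (rhoL k l η t)^2)) * ‖Q t‖
      ≤ (Real.sqrt ((β - 1)/β) + 1) *
          Real.exp (-(ν * (k:ℝ)^2 * t^3) / 24) *
          Real.sqrt (‖Q 0‖^2 + ‖W 0‖^2) := by
  intro T hT
  have hkne : ((k:ℝ)) ≠ 0 := Int.cast_ne_zero.mpr hk
  have hmpos := mf_pos k l η hk
  have hrsq := rho_sq k l η hk
  have hrpos := rho_pos k l η hk
  have hE := hE_deriv hk hQ hW
  have hGd := hG_deriv hk hE
  have hHd := hH_deriv hk hE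
  have hk1 : (1:ℝ) ≤ (k:ℝ)^2 := by
    have h1 : (1:ℤ) ≤ k^2 := by rcases hk.lt_or_gt with h|h <;> nlinarith
    exact_mod_cast h1
  have hkl2 : (0:ℝ) < (k:ℝ)^2 + (l:ℝ)^2 := by nlinarith [sq_nonneg ((l:ℝ))]
  have hkl21 : (1:ℝ) ≤ ((k:ℝ)^2 + (l:ℝ)^2)^2 := by nlinarith [sq_nonneg ((l:ℝ))]
  set s₁ : ℝ := max 0 (min (η/(k:ℝ)) T) with hs₁def
  have hs₁0 : 0 ≤ s₁ := le_max_left _ _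
  have hs₁T : s₁ ≤ T := max_le hT (min_le_right _ _)
  -- G is antitone on [0, s₁]
  have hGanti : AntitoneOn (fun τ => EE Q W τ * Real.exp (2*ν*Mf k l η τ))
      (Set.Icc 0 s₁) := by
    apply antitoneOn_of_deriv_nonpos (convex_Icc 0 s₁)
    · intro s hs
      exact (hGd s hs.1).continuousAt.continuousWithinAt
    · rw [interior_Icc]
      intro s hs
      exact (hGd s hs.1.le).differentiableAt.differentiableWithinAt
    · rw [interior_Icc]
      intro s hs
      rw [(hGd s hs.1.le).deriv]
      have hsη : s < η/(k:ℝ) := by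
        rcases le_or_gt (min (η/(k:ℝ)) T) 0 with hc | hc
        · have h0 : s₁ = 0 := by rw [hs₁def]; exact max_eq_left hc
          rw [h0] at hs
          exact absurd (hs.1.trans hs.2) (lt_irrefl 0)
        · have h1 : s₁ = min (η/(k:ℝ)) T := by rw [hs₁def]; exact max_eq_right hc.le
          have h2 := hs.2
          rw [h1] at h2
          exact lt_of_lt_of_le h2 (min_le_left _ _)
      have hfac : 0 ≤ (k:ℝ)*(η - (k:ℝ)*s) := by
        have hid : (k:ℝ)*(η - (k:ℝ)*s) = (k:ℝ)^2*(η/(k:ℝ) - s) := by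
          field_simp
        rw [hid]
        exact mul_nonneg (sq_nonneg _) (by linarith)
      have h2 : 0 ≤ ((k:ℝ)*(η - (k:ℝ)*s)/mf k l η s)
          *(Complex.normSq (W s)*Real.exp (2*ν*Mf k l η s)) :=
        mul_nonneg (div_nonneg hfac (hmpos s).le)
          (mul_nonneg (Complex.normSq_nonneg _) (Real.exp_pos _).le)
      nlinarith [h2]
  -- H is antitone on [s₁, T]
  have hHanti : AntitoneOn (fun τ => EE Q W τ / mf k l η τ * Real.exp (2*ν*Mf k l η τ))
      (Set.Icc s₁ T) := by
    apply antitoneOn_of_deriv_nonpos (convex_Icc s₁ T)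
    · intro s hs
      exact (hHd s (hs₁0.trans hs.1)).continuousAt.continuousWithinAt
    · rw [interior_Icc]
      intro s hs
      exact (hHd s (hs₁0.trans hs.1.le)).differentiableAt.differentiableWithinAt
    · rw [interior_Icc]
      intro s hs
      rw [(hHd s (hs₁0.trans hs.1.le)).deriv]
      have hsη : η/(k:ℝ) ≤ s := by
        rcases le_total (η/(k:ℝ)) T with hc | hc
        · have h1 : η/(k:ℝ) ≤ s₁ := by
            rw [hs₁def, min_eq_left hc]; exact le_max_right _ _
          linarith [hs.1]
        · have h1 : s₁ = T := by
            rw [hs₁def, min_eq_right hc]; exact max_eq_right hT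
          rw [h1] at hs
          exact absurd (hs.1.trans hs.2) (lt_irrefl T)
      have hfac : (k:ℝ)*(η - (k:ℝ)*s) ≤ 0 := by
        have hid : (k:ℝ)*(η - (k:ℝ)*s) = (k:ℝ)^2*(η/(k:ℝ) - s) := by
          field_simp
        rw [hid]
        nlinarith [mul_nonneg (sq_nonneg ((k:ℝ))) (show (0:ℝ) ≤ s - η/(k:ℝ) by linarith)]
      have h2 : 0 ≤ Complex.normSq (Q s)/(mf k l η s)^2*Real.exp (2*ν*Mf k l η s) :=
        mul_nonneg (div_nonneg (Complex.normSq_nonneg _) (sq_nonneg _)) (Real.exp_pos _).le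
      nlinarith [mul_nonneg (neg_nonneg.2 hfac) h2]
  -- the key Gronwall-type bound
  set P : ℝ := Real.exp (ν*Mf k l η T) with hPdef
  have hP : 0 < P := Real.exp_pos _
  have hP2 : Real.exp (2*ν*Mf k l η T) = P^2 := by
    rw [hPdef, sq, ← Real.exp_add]; congr 1; ring
  have hM0 : Mf k l η 0 = 0 := by unfold Mf; ring
  have hG0 : EE Q W s₁ * Real.exp (2*ν*Mf k l η s₁) ≤ EE Q W 0 := by
    have h := hGanti (Set.left_mem_Icc.2 hs₁0) (Set.right_mem_Icc.2 hs₁0) hs₁0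
    simpa [hM0] using h
  have hH1 : EE Q W T / mf k l η T * Real.exp (2*ν*Mf k l η T)
      ≤ EE Q W s₁ / mf k l η s₁ * Real.exp (2*ν*Mf k l η s₁) :=
    hHanti (Set.left_mem_Icc.2 hs₁T) (Set.right_mem_Icc.2 hs₁T) hs₁T
  have hkey : EE Q W T * P^2 * mf k l η s₁ ≤ EE Q W 0 * mf k l η T := by
    rw [div_mul_eq_mul_div, div_mul_eq_mul_div,
      div_le_div_iff₀ (hmpos T) (hmpos s₁)] at hH1
    rw [hP2] at hH1
    have h3 := mul_le_mul_of_nonneg_right hG0 (hmpos T).le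
    linarith [hH1, h3]
  -- norms and energies
  have hnormQ : ∀ s, ‖Q s‖^2 = Complex.normSq (Q s) := fun s => by
    rw [Complex.sq_norm]
  have hnormW : ∀ s, ‖W s‖^2 = Complex.normSq (W s) := fun s => by
    rw [Complex.sq_norm]
  have hE0nn : 0 ≤ EE Q W 0 :=
    add_nonneg (Complex.normSq_nonneg _) (Complex.normSq_nonneg _)
  have hQT : ‖Q T‖^2 ≤ EE Q W T := by
    rw [hnormQ]; unfold EE; linarith [Complex.normSq_nonneg (W T)]
  have hWT : ‖W T‖^2 ≤ EE Q W T := by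
    rw [hnormW]; unfold EE; linarith [Complex.normSq_nonneg (Q T)]
  have hQb : ‖Q T‖^2*P^2*mf k l η s₁ ≤ EE Q W 0 * mf k l η T := by
    have h := mul_le_mul_of_nonneg_right hQT
      (mul_nonneg (pow_pos hP 2).le (hmpos s₁).le)
    calc ‖Q T‖^2*P^2*mf k l η s₁ = ‖Q T‖^2*(P^2*mf k l η s₁) := by ring
      _ ≤ EE Q W T*(P^2*mf k l η s₁) := h
      _ = EE Q W T*P^2*mf k l η s₁ := by ring
      _ ≤ EE Q W 0*mf k l η T := hkey
  have hWb : ‖W T‖^2*P^2*mf k l η s₁ ≤ EE Q W 0 * mf k l η T := by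
    have h := mul_le_mul_of_nonneg_right hWT
      (mul_nonneg (pow_pos hP 2).le (hmpos s₁).le)
    calc ‖W T‖^2*P^2*mf k l η s₁ = ‖W T‖^2*(P^2*mf k l η s₁) := by ring
      _ ≤ EE Q W T*(P^2*mf k l η s₁) := h
      _ = EE Q W T*P^2*mf k l η s₁ := by ring
      _ ≤ EE Q W 0*mf k l η T := hkey
  have hl2 : (l:ℝ)^2 ≤ mf k l η s₁ := by
    unfold mf; nlinarith [sq_nonneg (η - (k:ℝ)*s₁)]
  have hk2 : (k:ℝ)^2 ≤ mf k l η s₁ := by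
    unfold mf; nlinarith [sq_nonneg (η - (k:ℝ)*s₁), sq_nonneg ((l:ℝ))]
  have het2 : (η - (k:ℝ)*T)^2 ≤ mf k l η T := by
    unfold mf; nlinarith [sq_nonneg ((l:ℝ))]
  have hWpoly : (l:ℝ)^2*‖W T‖^2*P^2
      ≤ EE Q W 0 * (((k:ℝ)^2+(l:ℝ)^2)^2 * mf k l η T) := by
    have e1 : (l:ℝ)^2*(‖W T‖^2*P^2*mf k l η s₁) ≤ (l:ℝ)^2*(EE Q W 0*mf k l η T) :=
      mul_le_mul_of_nonneg_left hWb (sq_nonneg _)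
    have e2 : (l:ℝ)^2*(EE Q W 0*mf k l η T) ≤ mf k l η s₁*(EE Q W 0*mf k l η T) :=
      mul_le_mul_of_nonneg_right hl2 (mul_nonneg hE0nn (hmpos T).le)
    have e3 : ((l:ℝ)^2*‖W T‖^2*P^2)*mf k l η s₁ ≤ (EE Q W 0*mf k l η T)*mf k l η s₁ := by
      calc ((l:ℝ)^2*‖W T‖^2*P^2)*mf k l η s₁
          = (l:ℝ)^2*(‖W T‖^2*P^2*mf k l η s₁) := by ring
        _ ≤ (l:ℝ)^2*(EE Q W 0*mf k l η T) := e1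
        _ ≤ mf k l η s₁*(EE Q W 0*mf k l η T) := e2
        _ = (EE Q W 0*mf k l η T)*mf k l η s₁ := by ring
    have e4 : (l:ℝ)^2*‖W T‖^2*P^2 ≤ EE Q W 0*mf k l η T :=
      le_of_mul_le_mul_right e3 (hmpos s₁)
    calc (l:ℝ)^2*‖W T‖^2*P^2 ≤ EE Q W 0*mf k l η T := e4
      _ = 1*(EE Q W 0*mf k l η T) := by ring
      _ ≤ ((k:ℝ)^2+(l:ℝ)^2)^2*(EE Q W 0*mf k l η T) :=
          mul_le_mul_of_nonneg_right hkl21 (mul_nonneg hE0nn (hmpos T).le)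
      _ = EE Q W 0 * (((k:ℝ)^2+(l:ℝ)^2)^2 * mf k l η T) := by ring
  have hQpoly : (k:ℝ)^2*(η-(k:ℝ)*T)^2*‖Q T‖^2*P^2
      ≤ EE Q W 0 * (((k:ℝ)^2+(l:ℝ)^2)^2 * (mf k l η T)^2) := by
    have f1 : (k:ℝ)^2*(‖Q T‖^2*P^2*mf k l η s₁) ≤ (k:ℝ)^2*(EE Q W 0*mf k l η T) :=
      mul_le_mul_of_nonneg_left hQb (sq_nonneg _)
    have f2 : (k:ℝ)^2*(EE Q W 0*mf k l η T) ≤ mf k l η s₁*(EE Q W 0*mf k l η T) :=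
      mul_le_mul_of_nonneg_right hk2 (mul_nonneg hE0nn (hmpos T).le)
    have f3 : ((k:ℝ)^2*‖Q T‖^2*P^2)*mf k l η s₁ ≤ (EE Q W 0*mf k l η T)*mf k l η s₁ := by
      calc ((k:ℝ)^2*‖Q T‖^2*P^2)*mf k l η s₁
          = (k:ℝ)^2*(‖Q T‖^2*P^2*mf k l η s₁) := by ring
        _ ≤ (k:ℝ)^2*(EE Q W 0*mf k l η T) := f1
        _ ≤ mf k l η s₁*(EE Q W 0*mf k l η T) := f2
        _ = (EE Q W 0*mf k l η T)*mf k l η s₁ := by ring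
    have f4 : (k:ℝ)^2*‖Q T‖^2*P^2 ≤ EE Q W 0*mf k l η T :=
      le_of_mul_le_mul_right f3 (hmpos s₁)
    have f6 : (η-(k:ℝ)*T)^2*(EE Q W 0*mf k l η T) ≤ mf k l η T*(EE Q W 0*mf k l η T) :=
      mul_le_mul_of_nonneg_right het2 (mul_nonneg hE0nn (hmpos T).le)
    calc (k:ℝ)^2*(η-(k:ℝ)*T)^2*‖Q T‖^2*P^2
        = (η-(k:ℝ)*T)^2*((k:ℝ)^2*‖Q T‖^2*P^2) := by ring
      _ ≤ (η-(k:ℝ)*T)^2*(EE Q W 0*mf k l η T) :=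
          mul_le_mul_of_nonneg_left f4 (sq_nonneg _)
      _ ≤ mf k l η T*(EE Q W 0*mf k l η T) := f6
      _ = 1*(EE Q W 0*(mf k l η T)^2) := by ring
      _ ≤ ((k:ℝ)^2+(l:ℝ)^2)^2*(EE Q W 0*(mf k l η T)^2) :=
          mul_le_mul_of_nonneg_right hkl21 (mul_nonneg hE0nn (sq_nonneg _))
      _ = EE Q W 0 * (((k:ℝ)^2+(l:ℝ)^2)^2 * (mf k l η T)^2) := by ring
  -- weighted bounds
  have hC1 : |(l:ℝ)|/(((k:ℝ)^2+(l:ℝ)^2)*rhoL k l η T)*‖W T‖*P ≤ Real.sqrt (EE Q W 0) := by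
    have hnn : 0 ≤ |(l:ℝ)|/(((k:ℝ)^2+(l:ℝ)^2)*rhoL k l η T)*‖W T‖*P :=
      mul_nonneg (mul_nonneg (div_nonneg (abs_nonneg _)
        (mul_nonneg hkl2.le (hrpos T).le)) (norm_nonneg _)) hP.le
    rw [← Real.sqrt_sq hnn]
    apply Real.sqrt_le_sqrt
    have hexpand : (|(l:ℝ)|/(((k:ℝ)^2+(l:ℝ)^2)*rhoL k l η T)*‖W T‖*P)^2
        = (l:ℝ)^2*‖W T‖^2*P^2/(((k:ℝ)^2+(l:ℝ)^2)^2*mf k l η T) := by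
      rw [mul_pow, mul_pow, div_pow, mul_pow, sq_abs, hrsq T]
      ring
    rw [hexpand, div_le_iff₀ (mul_pos (pow_pos hkl2 2) (hmpos T))]
    exact hWpoly
  have hC2 : |(k:ℝ)| * |η-(k:ℝ)*T|/(((k:ℝ)^2+(l:ℝ)^2)*mf k l η T)*‖Q T‖*P
      ≤ Real.sqrt (EE Q W 0) := by
    have hnn : 0 ≤ |(k:ℝ)| * |η-(k:ℝ)*T|/(((k:ℝ)^2+(l:ℝ)^2)*mf k l η T)*‖Q T‖*P :=
      mul_nonneg (mul_nonneg (div_nonneg (mul_nonneg (abs_nonneg _) (abs_nonneg _))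
        (mul_nonneg hkl2.le (hmpos T).le)) (norm_nonneg _)) hP.le
    rw [← Real.sqrt_sq hnn]
    apply Real.sqrt_le_sqrt
    have hexpand : (|(k:ℝ)| * |η-(k:ℝ)*T|/(((k:ℝ)^2+(l:ℝ)^2)*mf k l η T)*‖Q T‖*P)^2
        = (k:ℝ)^2*(η-(k:ℝ)*T)^2*‖Q T‖^2*P^2/(((k:ℝ)^2+(l:ℝ)^2)^2*(mf k l η T)^2) := by
      rw [mul_pow, mul_pow, div_pow, mul_pow, mul_pow, sq_abs, sq_abs]
      ring
    rw [hexpand, div_le_iff₀ (mul_pos (pow_pos hkl2 2) (pow_pos (hmpos T) 2))]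
    exact hQpoly
  -- exponent comparison
  have hM24 : (ν*(k:ℝ)^2*T^3)/24 ≤ ν*Mf k l η T := by
    have hMlow : (k:ℝ)^2*T^3/24 ≤ Mf k l η T := by
      unfold Mf
      nlinarith [mul_nonneg hT (sq_nonneg (η - (k:ℝ)*T/2)),
        mul_nonneg (mul_nonneg hT hT) hT,
        mul_nonneg hT (sq_nonneg ((l:ℝ))), mul_nonneg hT (sq_nonneg ((k:ℝ))),
        mul_nonneg (sq_nonneg ((k:ℝ))) (mul_nonneg (mul_nonneg hT hT) hT)]
    nlinarith [mul_le_mul_of_nonneg_left hMlow hν.le]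
  have hexpmono : Real.exp (-(ν*Mf k l η T)) ≤ Real.exp (-(ν*(k:ℝ)^2*T^3)/24) :=
    Real.exp_le_exp.2 (by linarith)
  -- final assembly
  rw [hrsq T]
  have hE0eq : ‖Q 0‖^2 + ‖W 0‖^2 = EE Q W 0 := by
    rw [hnormQ 0, hnormW 0]; rfl
  rw [hE0eq]
  have hfin1 : |(l:ℝ)|/(((k:ℝ)^2+(l:ℝ)^2)*rhoL k l η T)*‖W T‖
      ≤ Real.exp (-(ν*(k:ℝ)^2*T^3)/24) * Real.sqrt (EE Q W 0) := by
    have h1 : |(l:ℝ)|/(((k:ℝ)^2+(l:ℝ)^2)*rhoL k l η T)*‖W T‖ ≤ Real.sqrt (EE Q W 0)/P :=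
      (le_div_iff₀ hP).2 hC1
    have h2 : Real.sqrt (EE Q W 0)/P = Real.exp (-(ν*Mf k l η T)) * Real.sqrt (EE Q W 0) := by
      rw [Real.exp_neg, ← hPdef]; ring
    calc |(l:ℝ)|/(((k:ℝ)^2+(l:ℝ)^2)*rhoL k l η T)*‖W T‖ ≤ Real.sqrt (EE Q W 0)/P := h1
      _ = Real.exp (-(ν*Mf k l η T)) * Real.sqrt (EE Q W 0) := h2
      _ ≤ Real.exp (-(ν*(k:ℝ)^2*T^3)/24) * Real.sqrt (EE Q W 0) :=
          mul_le_mul_of_nonneg_right hexpmono (Real.sqrt_nonneg _)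
  have hfin2 : |(k:ℝ)| * |η-(k:ℝ)*T|/(((k:ℝ)^2+(l:ℝ)^2)*mf k l η T)*‖Q T‖
      ≤ Real.exp (-(ν*(k:ℝ)^2*T^3)/24) * Real.sqrt (EE Q W 0) := by
    have h1 : |(k:ℝ)| * |η-(k:ℝ)*T|/(((k:ℝ)^2+(l:ℝ)^2)*mf k l η T)*‖Q T‖
        ≤ Real.sqrt (EE Q W 0)/P := (le_div_iff₀ hP).2 hC2
    have h2 : Real.sqrt (EE Q W 0)/P = Real.exp (-(ν*Mf k l η T)) * Real.sqrt (EE Q W 0) := by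
      rw [Real.exp_neg, ← hPdef]; ring
    calc |(k:ℝ)| * |η-(k:ℝ)*T|/(((k:ℝ)^2+(l:ℝ)^2)*mf k l η T)*‖Q T‖
        ≤ Real.sqrt (EE Q W 0)/P := h1
      _ = Real.exp (-(ν*Mf k l η T)) * Real.sqrt (EE Q W 0) := h2
      _ ≤ Real.exp (-(ν*(k:ℝ)^2*T^3)/24) * Real.sqrt (EE Q W 0) :=
          mul_le_mul_of_nonneg_right hexpmono (Real.sqrt_nonneg _)
  have hS : 0 ≤ Real.sqrt ((β-1)/β) := Real.sqrt_nonneg _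
  nlinarith [hfin1, hfin2, mul_le_mul_of_nonneg_left hfin1 hS]
end
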